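/- arXiv:1509.01605 — 2 statements merged into one kernel-verified Lean document; each statement's English description precedes it below -/
import Mathlib

section
/- For every configuration η ∈ Ω_{L,N;m1,m2}, S1(η) = S2(η), where S1(η) = Σ_p a_{r(p)} (1−q^{B_p})(1−q^{D_p+1})/(1−q^{C_p+1}) and S2(η) = Σ_p a_{r(p)+1} (1−q^{A_p+1})(1−q^{E_p})/(1−q^{F_p+1}), both sums running over all particles p of η, with the row index r(p)+1 taken cyclically mod N. -/
/-!
Interlacing particle configurations on the discrete torus `T_{L,N}`,
the periodized `q`-Whittaker dynamics and its Gibbs measures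
(Corwin–Toninelli, "A (2+1)-dimensional growth process with explicit
stationary measures").
-/

open scoped Classical

noncomputable section

namespace QWhittaker

/-- Sites of the discrete torus `T_{L,N} = (ℤ/Lℤ) × (ℤ/Nℤ)`.
The first coordinate is the horizontal position, the second one is the row. -/
abbrev Site (L N : ℕ) := ZMod L × ZMod N

/-- A particle configuration: `η p = true` iff site `p` carries a particle. -/
abbrev Cfg (L N : ℕ) := Site L N → Bool

variable {L N : ℕ}

/-- `A_p`: horizontal distance minus one from `p` to its right neighbour `p₁` on the same row. -/
def dA (η : Cfg L N) (p : Site L N) : ℕ :=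
  sInf {k : ℕ | 0 < k ∧ η (p.1 + (k : ZMod L), p.2) = true} - 1

/-- `B_p`: horizontal distance minus one from `p` to its neighbour `p₂`
(the first particle strictly to the right of `p` in the row below). -/
def dB (η : Cfg L N) (p : Site L N) : ℕ :=
  sInf {k : ℕ | 0 < k ∧ η (p.1 + (k : ZMod L), p.2 - 1) = true} - 1

/-- `C_p`: horizontal distance from `p` to its neighbour `p₃`
(the first particle weakly to the left of `p` in the row below); may be `0`. -/
def dC (η : Cfg L N) (p : Site L N) : ℕ :=
  sInf {k : ℕ | η (p.1 - (k : ZMod L), p.2 - 1) = true}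

/-- `D_p`: horizontal distance minus one from `p` to its left neighbour `p₄` on the same row. -/
def dD (η : Cfg L N) (p : Site L N) : ℕ :=
  sInf {k : ℕ | 0 < k ∧ η (p.1 - (k : ZMod L), p.2) = true} - 1

/-- `E_p`: horizontal distance minus one from `p` to its neighbour `p₅`
(the first particle strictly to the left of `p` in the row above). -/
def dE (η : Cfg L N) (p : Site L N) : ℕ :=
  sInf {k : ℕ | 0 < k ∧ η (p.1 - (k : ZMod L), p.2 + 1) = true} - 1

/-- `F_p`: horizontal distance from `p` to its up-right neighbour `p₆`
(the first particle weakly to the right of `p` in the row above); may be `0`. -/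
def dF (η : Cfg L N) (p : Site L N) : ℕ :=
  sInf {k : ℕ | η (p.1 + (k : ZMod L), p.2 + 1) = true}

/-- Interlaced configurations with `m1` particles per row: every row carries exactly `m1`
particles and, for every particle `p`, the row below contains exactly one particle with
horizontal position in `{x_p+1, …, x_{p₁}}` and exactly one with horizontal position in
`{x_{p₄}+1, …, x_p}`. -/
def Interlaced [NeZero L] [NeZero N] (m1 : ℕ) (η : Cfg L N) : Prop :=
  (∀ t : ZMod N, (Finset.univ.filter fun s : ZMod L => η (s, t) = true).card = m1) ∧
  ∀ p : Site L N, η p = true →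
    ((Finset.Icc 1 (dA η p + 1)).filter
        fun k : ℕ => η (p.1 + (k : ZMod L), p.2 - 1) = true).card = 1 ∧
    ((Finset.Icc 0 (dD η p)).filter
        fun k : ℕ => η (p.1 - (k : ZMod L), p.2 - 1) = true).card = 1

/-- The map `p ↦ p₆` sending a particle to its up-right neighbour. -/
def stepUR (η : Cfg L N) (p : Site L N) : Site L N :=
  (p.1 + (dF η p : ZMod L), p.2 + 1)

/-- Return time of the loop `Γ` of successive up-right neighbours started at `p`. -/
def retTime (η : Cfg L N) (p : Site L N) : ℕ :=
  sInf {t : ℕ | 0 < t ∧ (stepUR η)^[t] p = p}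

/-- Vertical winding number `N_v` of the loop `Γ` started at `p`. -/
def windV (η : Cfg L N) (p : Site L N) : ℕ := retTime η p / N

/-- Horizontal winding number `N_h` of the loop `Γ` started at `p` (the total horizontal
displacement along `Γ` divided by the horizontal period `L`). -/
def windH (η : Cfg L N) (p : Site L N) : ℕ :=
  (∑ i ∈ Finset.range (retTime η p), dF η ((stepUR η)^[i] p)) / L

/-- The sector `Ω_{L,N;m1,m2}`: interlaced configurations with `m1` particles per row whose
winding numbers satisfy `m1 · N_h = m2 · N_v`, i.e. `m2 = m1 · N_h / N_v`. -/
def InSector [NeZero L] [NeZero N] (m1 m2 : ℕ) (η : Cfg L N) : Prop :=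
  Interlaced m1 η ∧ ∀ p : Site L N, η p = true → m1 * windH η p = m2 * windV η p

/-- The particles of a configuration, as a finite set of sites. -/
def particles [NeZero L] [NeZero N] (η : Cfg L N) : Finset (Site L N) :=
  Finset.univ.filter fun p => η p = true

/-- The `q`-Pochhammer symbol `(q;q)_n = (1-q)(1-q²)⋯(1-qⁿ)`. -/
def qPoch (q : ℝ) (n : ℕ) : ℝ := ∏ i ∈ Finset.range n, (1 - q ^ (i + 1))

/-- Unnormalised Gibbs weight `∏_p a_{r(p)}^{C_p} (q;q)_{A_p} / ((q;q)_{B_p} (q;q)_{C_p})`. -/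
def weight [NeZero L] [NeZero N] (q : ℝ) (a : ZMod N → ℝ) (η : Cfg L N) : ℝ :=
  ∏ p ∈ particles η,
    a p.2 ^ dC η p * qPoch q (dA η p) / (qPoch q (dB η p) * qPoch q (dC η p))

/-- The sector `Ω_{L,N;m1,m2}` as a finite set of configurations. -/
def sectorFinset (L N : ℕ) [NeZero L] [NeZero N] (m1 m2 : ℕ) : Finset (Cfg L N) :=
  Finset.univ.filter fun σ => InSector m1 m2 σ

/-- The normalised Gibbs probability measure `π = π_{L,N;m1,m2}` on the sector. -/
def gibbs [NeZero L] [NeZero N] (q : ℝ) (a : ZMod N → ℝ) (m1 m2 : ℕ) (σ : Cfg L N) : ℝ :=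
  weight q a σ / ∑ τ ∈ sectorFinset L N m1 m2, weight q a τ

/-- `V_p⁺`: the particle `p` together with all particles reachable from `p` along upward
edges (an upward edge joins `r` to its up-right neighbour `r₆` whenever `F_r = 0`). -/
def Vplus (η : Cfg L N) (p : Site L N) : Set (Site L N) :=
  {z | ∃ j : ℕ, z = (p.1, p.2 + (j : ZMod N)) ∧
    ∀ i : ℕ, i ≤ j → η (p.1, p.2 + (i : ZMod N)) = true}

/-- `V_p⁻`: the particle `p` together with all particles reachable from `p` along downward
edges (a downward edge joins `r` to its neighbour `r₃` whenever `C_r = 0`). -/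
def Vminus (η : Cfg L N) (p : Site L N) : Set (Site L N) :=
  {z | ∃ j : ℕ, z = (p.1, p.2 - (j : ZMod N)) ∧
    ∀ i : ℕ, i ≤ j → η (p.1, p.2 - (i : ZMod N)) = true}

/-- The configuration obtained from `η` by shifting every particle of `V_p⁺` by `+e₁`. -/
def moveR (η : Cfg L N) (p : Site L N) : Cfg L N := fun z =>
  decide ((η z = true ∧ z ∉ Vplus η p) ∨ (z.1 - 1, z.2) ∈ Vplus η p)

/-- The configuration obtained from `η` by shifting every particle of `V_p⁻` by `-e₁`. -/
def moveL (η : Cfg L N) (p : Site L N) : Cfg L N := fun z =>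
  decide ((η z = true ∧ z ∉ Vminus η p) ∨ (z.1 + 1, z.2) ∈ Vminus η p)

/-- The number of downward edges below `p` in `V_p⁻`. -/
def depth (η : Cfg L N) (p : Site L N) : ℕ :=
  sInf {j : ℕ | η (p.1, p.2 - ((j + 1 : ℕ) : ZMod N)) = false}

/-- `r_p⁻`, the lowest particle of `V_p⁻`. -/
def rbot (η : Cfg L N) (p : Site L N) : Site L N :=
  (p.1, p.2 - (depth η p : ZMod N))

/-- The number of upward edges above `p` in `V_p⁺`. -/
def height (η : Cfg L N) (p : Site L N) : ℕ :=
  sInf {j : ℕ | η (p.1, p.2 + ((j + 1 : ℕ) : ZMod N)) = false}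

/-- `r_p⁺`, the highest particle of `V_p⁺`. -/
def rtop (η : Cfg L N) (p : Site L N) : Site L N :=
  (p.1, p.2 + (height η p : ZMod N))

/-- The jump rate `a_{r(p)} (1-q^{B_p})(1-q^{D_p+1})/(1-q^{C_p+1})` of the update
shifting the family `V_p⁺` by `+e₁`. -/
def rate (q : ℝ) (a : ZMod N → ℝ) (η : Cfg L N) (p : Site L N) : ℝ :=
  a p.2 * (1 - q ^ dB η p) * (1 - q ^ (dD η p + 1)) / (1 - q ^ (dC η p + 1))

/-- The generator `𝓛` of the periodized `q`-Whittaker dynamics: for `σ ≠ η`, `𝓛(η,σ)` is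
the total rate of the updates taking `η` to `σ`, and the diagonal makes row sums vanish. -/
def gen [NeZero L] [NeZero N] (q : ℝ) (a : ZMod N → ℝ) (η σ : Cfg L N) : ℝ :=
  if σ = η then -∑ p ∈ particles η, rate q a η p
  else ∑ p ∈ (particles η).filter (fun p => moveR η p = σ), rate q a η p


/-! ### Auxiliary lemmas for the proof of `S1_eq_S2` -/

private lemma natInf_eq {S : Set ℕ} {n : ℕ} (hn : n ∈ S) (hmin : ∀ k, k < n → k ∉ S) :
    sInf S = n := by
  refine le_antisymm (Nat.sInf_le hn) ?_
  by_contra h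
  push_neg at h
  exact hmin _ h (Nat.sInf_mem ⟨n, hn⟩)

section Aux

variable {L N : ℕ} [NeZero L] [NeZero N] {η : Cfg L N}

private lemma ne_plus (hrow : ∀ t : ZMod N, ∃ s : ZMod L, η (s, t) = true)
    (x : ZMod L) (t : ZMod N) :
    {k : ℕ | 0 < k ∧ η (x + (k : ZMod L), t) = true}.Nonempty := by
  obtain ⟨s, hs⟩ := hrow t
  have hv : (((s - x).val : ℕ) : ZMod L) = s - x := ZMod.natCast_rightInverse (s - x)
  refine ⟨(s - x).val + L, by have := NeZero.pos L; omega, ?_⟩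
  have h1 : ((((s - x).val + L : ℕ)) : ZMod L) = s - x := by
    push_cast
    rw [hv, ZMod.natCast_self, add_zero]
  rw [h1, show x + (s - x) = s by ring]
  exact hs

private lemma ne_minus (hrow : ∀ t : ZMod N, ∃ s : ZMod L, η (s, t) = true)
    (x : ZMod L) (t : ZMod N) :
    {k : ℕ | 0 < k ∧ η (x - (k : ZMod L), t) = true}.Nonempty := by
  obtain ⟨s, hs⟩ := hrow t
  have hv : (((x - s).val : ℕ) : ZMod L) = x - s := ZMod.natCast_rightInverse (x - s)
  refine ⟨(x - s).val + L, by have := NeZero.pos L; omega, ?_⟩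
  have h1 : ((((x - s).val + L : ℕ)) : ZMod L) = x - s := by
    push_cast
    rw [hv, ZMod.natCast_self, add_zero]
  rw [h1, show x - (x - s) = s by ring]
  exact hs

private lemma ne_minus0 (hrow : ∀ t : ZMod N, ∃ s : ZMod L, η (s, t) = true)
    (x : ZMod L) (t : ZMod N) :
    {k : ℕ | η (x - (k : ZMod L), t) = true}.Nonempty := by
  obtain ⟨s, hs⟩ := hrow t
  have hv : (((x - s).val : ℕ) : ZMod L) = x - s := ZMod.natCast_rightInverse (x - s)
  refine ⟨(x - s).val, ?_⟩
  show η _ = true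
  rw [hv, show x - (x - s) = s by ring]
  exact hs

private lemma dA_spec (hrow : ∀ t : ZMod N, ∃ s : ZMod L, η (s, t) = true)
    (x : ZMod L) (t : ZMod N) :
    η (x + ((dA η (x, t) + 1 : ℕ) : ZMod L), t) = true ∧
    ∀ k : ℕ, 0 < k → k ≤ dA η (x, t) → η (x + (k : ZMod L), t) = false := by
  have hne := ne_plus hrow x t
  have hm := Nat.sInf_mem hne
  have h1 : 0 < sInf {k : ℕ | 0 < k ∧ η (x + (k : ZMod L), t) = true} := hm.1
  have he : dA η (x, t) + 1 = sInf {k : ℕ | 0 < k ∧ η (x + (k : ZMod L), t) = true} := by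
    unfold dA; dsimp only; omega
  constructor
  · rw [he]; exact hm.2
  · intro k hk hk'
    have hlt : k < sInf {k : ℕ | 0 < k ∧ η (x + (k : ZMod L), t) = true} := by omega
    have hnm := Nat.notMem_of_lt_sInf hlt
    simp only [Set.mem_setOf_eq, not_and, Bool.not_eq_true] at hnm
    exact hnm hk

private lemma dD_spec (hrow : ∀ t : ZMod N, ∃ s : ZMod L, η (s, t) = true)
    (x : ZMod L) (t : ZMod N) :
    η (x - ((dD η (x, t) + 1 : ℕ) : ZMod L), t) = true ∧
    ∀ k : ℕ, 0 < k → k ≤ dD η (x, t) → η (x - (k : ZMod L), t) = false := by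
  have hne := ne_minus hrow x t
  have hm := Nat.sInf_mem hne
  have h1 : 0 < sInf {k : ℕ | 0 < k ∧ η (x - (k : ZMod L), t) = true} := hm.1
  have he : dD η (x, t) + 1 = sInf {k : ℕ | 0 < k ∧ η (x - (k : ZMod L), t) = true} := by
    unfold dD; dsimp only; omega
  constructor
  · rw [he]; exact hm.2
  · intro k hk hk'
    have hlt : k < sInf {k : ℕ | 0 < k ∧ η (x - (k : ZMod L), t) = true} := by omega
    have hnm := Nat.notMem_of_lt_sInf hlt
    simp only [Set.mem_setOf_eq, not_and, Bool.not_eq_true] at hnm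
    exact hnm hk

private lemma dB_spec (hrow : ∀ t : ZMod N, ∃ s : ZMod L, η (s, t) = true)
    (x : ZMod L) (t : ZMod N) :
    η (x + ((dB η (x, t) + 1 : ℕ) : ZMod L), t - 1) = true ∧
    ∀ k : ℕ, 0 < k → k ≤ dB η (x, t) → η (x + (k : ZMod L), t - 1) = false := by
  have hne := ne_plus hrow x (t - 1)
  have hm := Nat.sInf_mem hne
  have h1 : 0 < sInf {k : ℕ | 0 < k ∧ η (x + (k : ZMod L), t - 1) = true} := hm.1
  have he : dB η (x, t) + 1 = sInf {k : ℕ | 0 < k ∧ η (x + (k : ZMod L), t - 1) = true} := by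
    unfold dB; dsimp only; omega
  constructor
  · rw [he]; exact hm.2
  · intro k hk hk'
    have hlt : k < sInf {k : ℕ | 0 < k ∧ η (x + (k : ZMod L), t - 1) = true} := by omega
    have hnm := Nat.notMem_of_lt_sInf hlt
    simp only [Set.mem_setOf_eq, not_and, Bool.not_eq_true] at hnm
    exact hnm hk

private lemma dC_spec (hrow : ∀ t : ZMod N, ∃ s : ZMod L, η (s, t) = true)
    (x : ZMod L) (t : ZMod N) :
    η (x - ((dC η (x, t) : ℕ) : ZMod L), t - 1) = true ∧
    ∀ k : ℕ, k < dC η (x, t) → η (x - (k : ZMod L), t - 1) = false := by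
  have hne := ne_minus0 hrow x (t - 1)
  have hm := Nat.sInf_mem hne
  refine ⟨hm, ?_⟩
  intro k hk
  have hlt : k < sInf {k : ℕ | η (x - (k : ZMod L), t - 1) = true} := hk
  have hnm := Nat.notMem_of_lt_sInf hlt
  simp only [Set.mem_setOf_eq, Bool.not_eq_true] at hnm
  exact hnm

/-- `C_p ≤ D_p` (from the second interlacing condition). -/
private lemma dC_le_dD {m1 : ℕ} (hint : Interlaced m1 η) {x : ZMod L} {t : ZMod N}
    (hp : η (x, t) = true) : dC η (x, t) ≤ dD η (x, t) := by
  have h1 := (hint.2 (x, t) hp).2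
  have hpos : 0 < ((Finset.Icc 0 (dD η (x, t))).filter
      fun k : ℕ => η ((x, t).1 - (k : ZMod L), (x, t).2 - 1) = true).card := by
    rw [h1]; omega
  obtain ⟨k, hk⟩ := Finset.card_pos.mp hpos
  rw [Finset.mem_filter, Finset.mem_Icc] at hk
  have hle : sInf {k : ℕ | η (x - (k : ZMod L), t - 1) = true} ≤ k := Nat.sInf_le hk.2
  have : dC η (x, t) = sInf {k : ℕ | η (x - (k : ZMod L), t - 1) = true} := by
    unfold dC; dsimp only
  omega

/-- `B_p ≤ A_p` (from the first interlacing condition). -/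
private lemma dB_le_dA {m1 : ℕ} (hint : Interlaced m1 η) {x : ZMod L} {t : ZMod N}
    (hp : η (x, t) = true) : dB η (x, t) ≤ dA η (x, t) := by
  have h1 := (hint.2 (x, t) hp).1
  have hpos : 0 < ((Finset.Icc 1 (dA η (x, t) + 1)).filter
      fun k : ℕ => η ((x, t).1 + (k : ZMod L), (x, t).2 - 1) = true).card := by
    rw [h1]; omega
  obtain ⟨k, hk⟩ := Finset.card_pos.mp hpos
  rw [Finset.mem_filter, Finset.mem_Icc] at hk
  have hle : sInf {k : ℕ | 0 < k ∧ η (x + (k : ZMod L), t - 1) = true} ≤ k :=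
    Nat.sInf_le ⟨by omega, hk.2⟩
  have : dB η (x, t) = sInf {k : ℕ | 0 < k ∧ η (x + (k : ZMod L), t - 1) = true} - 1 := by
    unfold dB; dsimp only
  omega

/-- Uniqueness in the first interlacing condition. -/
private lemma dB_uniq {m1 : ℕ} (hint : Interlaced m1 η)
    (hrow : ∀ t : ZMod N, ∃ s : ZMod L, η (s, t) = true) {x : ZMod L} {t : ZMod N}
    (hp : η (x, t) = true) :
    ∀ m : ℕ, 0 < m → m ≤ dA η (x, t) + 1 → m ≠ dB η (x, t) + 1 →
      η (x + (m : ZMod L), t - 1) = false := by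
  intro m hm hmle hne
  by_contra hmemb
  rw [Bool.not_eq_false] at hmemb
  have h1 := (hint.2 (x, t) hp).1
  obtain ⟨w, hw⟩ := Finset.card_eq_one.mp h1
  have hBmem : dB η (x, t) + 1 ∈ (Finset.Icc 1 (dA η (x, t) + 1)).filter
      fun k : ℕ => η ((x, t).1 + (k : ZMod L), (x, t).2 - 1) = true := by
    rw [Finset.mem_filter, Finset.mem_Icc]
    have hBA := dB_le_dA hint hp
    exact ⟨⟨by omega, by omega⟩, (dB_spec hrow x t).1⟩
  have hmmem : m ∈ (Finset.Icc 1 (dA η (x, t) + 1)).filter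
      fun k : ℕ => η ((x, t).1 + (k : ZMod L), (x, t).2 - 1) = true := by
    rw [Finset.mem_filter, Finset.mem_Icc]
    exact ⟨⟨by omega, hmle⟩, hmemb⟩
  rw [hw, Finset.mem_singleton] at hBmem hmmem
  exact hne (hmmem.trans hBmem.symm)

/-- `F_{p₃} = C_p`. -/
private lemma dF_sigma3 (hrow : ∀ t : ZMod N, ∃ s : ZMod L, η (s, t) = true)
    {m1 : ℕ} (hint : Interlaced m1 η) {x : ZMod L} {t : ZMod N} (hp : η (x, t) = true) :
    dF η (x - ((dC η (x, t) : ℕ) : ZMod L), t - 1) = dC η (x, t) := by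
  have hcd := dC_le_dD hint hp
  have hD := dD_spec hrow x t
  unfold dF
  dsimp only
  apply natInf_eq
  · simp only [Set.mem_setOf_eq]
    rw [sub_add_cancel, sub_add_cancel]
    exact hp
  · intro k hk hmemb
    simp only [Set.mem_setOf_eq] at hmemb
    rw [sub_add_cancel] at hmemb
    have e : x - ((dC η (x, t) : ℕ) : ZMod L) + (k : ZMod L)
        = x - (((dC η (x, t) - k : ℕ)) : ZMod L) := by
      rw [Nat.cast_sub hk.le]; ring
    rw [e, hD.2 (dC η (x, t) - k) (by omega) (by omega)] at hmemb
    exact Bool.false_ne_true hmemb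

/-- `E_{p₃} = D_p - C_p`. -/
private lemma dE_sigma3 (hrow : ∀ t : ZMod N, ∃ s : ZMod L, η (s, t) = true)
    {m1 : ℕ} (hint : Interlaced m1 η) {x : ZMod L} {t : ZMod N} (hp : η (x, t) = true) :
    dE η (x - ((dC η (x, t) : ℕ) : ZMod L), t - 1) = dD η (x, t) - dC η (x, t) := by
  have hcd := dC_le_dD hint hp
  have hD := dD_spec hrow x t
  unfold dE
  dsimp only
  rw [sub_add_cancel]
  have h : sInf {k : ℕ | 0 < k ∧ η (x - ((dC η (x, t) : ℕ) : ZMod L) - (k : ZMod L), t) = true}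
      = dD η (x, t) + 1 - dC η (x, t) := by
    apply natInf_eq
    · refine ⟨by omega, ?_⟩
      have e : x - ((dC η (x, t) : ℕ) : ZMod L)
          - (((dD η (x, t) + 1 - dC η (x, t) : ℕ)) : ZMod L)
          = x - (((dD η (x, t) + 1 : ℕ)) : ZMod L) := by
        rw [Nat.cast_sub (by omega : dC η (x, t) ≤ dD η (x, t) + 1)]
        push_cast
        ring
      rw [e]
      exact hD.1
    · intro k hk hmemb
      obtain ⟨hk0, hmemb⟩ := hmemb
      have e : x - ((dC η (x, t) : ℕ) : ZMod L) - (k : ZMod L)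
          = x - (((dC η (x, t) + k : ℕ)) : ZMod L) := by
        push_cast; ring
      rw [e, hD.2 (dC η (x, t) + k) (by omega) (by omega)] at hmemb
      exact Bool.false_ne_true hmemb
  rw [h]
  omega

/-- `A_{p₃} = B_p + C_p`. -/
private lemma dA_sigma3 (hrow : ∀ t : ZMod N, ∃ s : ZMod L, η (s, t) = true)
    {m1 : ℕ} (hint : Interlaced m1 η) {x : ZMod L} {t : ZMod N} (hp : η (x, t) = true) :
    dA η (x - ((dC η (x, t) : ℕ) : ZMod L), t - 1) = dB η (x, t) + dC η (x, t) := by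
  have hB := dB_spec hrow x t
  have hC := dC_spec hrow x t
  unfold dA
  dsimp only
  have h : sInf {k : ℕ | 0 < k ∧ η (x - ((dC η (x, t) : ℕ) : ZMod L) + (k : ZMod L), t - 1) = true}
      = dB η (x, t) + 1 + dC η (x, t) := by
    apply natInf_eq
    · refine ⟨by omega, ?_⟩
      have e : x - ((dC η (x, t) : ℕ) : ZMod L)
          + (((dB η (x, t) + 1 + dC η (x, t) : ℕ)) : ZMod L)
          = x + (((dB η (x, t) + 1 : ℕ)) : ZMod L) := by
        push_cast; ring
      rw [e]
      exact hB.1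
    · intro k hk hmemb
      obtain ⟨hk0, hmemb⟩ := hmemb
      rcases le_or_gt k (dC η (x, t)) with hkc | hkc
      · have e : x - ((dC η (x, t) : ℕ) : ZMod L) + (k : ZMod L)
            = x - (((dC η (x, t) - k : ℕ)) : ZMod L) := by
          rw [Nat.cast_sub hkc]; ring
        rw [e, hC.2 (dC η (x, t) - k) (by omega)] at hmemb
        exact Bool.false_ne_true hmemb
      · have e : x - ((dC η (x, t) : ℕ) : ZMod L) + (k : ZMod L)
            = x + (((k - dC η (x, t) : ℕ)) : ZMod L) := by
          rw [Nat.cast_sub hkc.le]; ring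
        rw [e, hB.2 (k - dC η (x, t)) (by omega) (by omega)] at hmemb
        exact Bool.false_ne_true hmemb
  rw [h]
  omega

/-- `D_{p₁} = A_p`. -/
private lemma dD_sigma1 (hrow : ∀ t : ZMod N, ∃ s : ZMod L, η (s, t) = true)
    {x : ZMod L} {t : ZMod N} (hp : η (x, t) = true) :
    dD η (x + ((dA η (x, t) + 1 : ℕ) : ZMod L), t) = dA η (x, t) := by
  have hA := dA_spec hrow x t
  unfold dD
  dsimp only
  have h : sInf {k : ℕ | 0 < k ∧ η (x + ((dA η (x, t) + 1 : ℕ) : ZMod L) - (k : ZMod L), t) = true}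
      = dA η (x, t) + 1 := by
    apply natInf_eq
    · refine ⟨by omega, ?_⟩
      rw [show x + ((dA η (x, t) + 1 : ℕ) : ZMod L)
          - (((dA η (x, t) + 1 : ℕ)) : ZMod L) = x by ring]
      exact hp
    · intro k hk hmemb
      obtain ⟨hk0, hmemb⟩ := hmemb
      have e : x + ((dA η (x, t) + 1 : ℕ) : ZMod L) - (k : ZMod L)
          = x + (((dA η (x, t) + 1 - k : ℕ)) : ZMod L) := by
        rw [Nat.cast_sub (by omega : k ≤ dA η (x, t) + 1)]; ring
      rw [e, hA.2 (dA η (x, t) + 1 - k) (by omega) (by omega)] at hmemb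
      exact Bool.false_ne_true hmemb
  rw [h]
  omega

/-- `C_{p₁} = A_p - B_p`. -/
private lemma dC_sigma1 (hrow : ∀ t : ZMod N, ∃ s : ZMod L, η (s, t) = true)
    {m1 : ℕ} (hint : Interlaced m1 η) {x : ZMod L} {t : ZMod N} (hp : η (x, t) = true) :
    dC η (x + ((dA η (x, t) + 1 : ℕ) : ZMod L), t) = dA η (x, t) - dB η (x, t) := by
  have hB := dB_spec hrow x t
  have hBA := dB_le_dA hint hp
  have hU := dB_uniq hint hrow hp
  unfold dC
  dsimp only
  apply natInf_eq
  · simp only [Set.mem_setOf_eq]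
    have e : x + ((dA η (x, t) + 1 : ℕ) : ZMod L) - (((dA η (x, t) - dB η (x, t) : ℕ)) : ZMod L)
        = x + (((dB η (x, t) + 1 : ℕ)) : ZMod L) := by
      rw [Nat.cast_sub hBA]
      push_cast
      ring
    rw [e]
    exact hB.1
  · intro k hk hmemb
    simp only [Set.mem_setOf_eq] at hmemb
    have e : x + ((dA η (x, t) + 1 : ℕ) : ZMod L) - (k : ZMod L)
        = x + (((dA η (x, t) + 1 - k : ℕ)) : ZMod L) := by
      rw [Nat.cast_sub (by omega : k ≤ dA η (x, t) + 1)]; ring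
    rw [e, hU (dA η (x, t) + 1 - k) (by omega) (by omega) (by omega)] at hmemb
    exact Bool.false_ne_true hmemb

private lemma finset_rightinv {α : Type*} [DecidableEq α] {s : Finset α} {i j : α → α}
    (hi : ∀ a ∈ s, i a ∈ s) (hji : ∀ a ∈ s, j (i a) = a) :
    ∀ b ∈ s, j b ∈ s ∧ i (j b) = b := by
  have hinj : Set.InjOn i ↑s := fun a ha a' ha' h => by
    rw [← hji a ha, h, hji a' ha']
  have himg : s.image i = s := Finset.eq_of_subset_of_card_le
    (fun b hb => by
      obtain ⟨a, ha, rfl⟩ := Finset.mem_image.mp hb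
      exact hi a ha)
    (le_of_eq (Finset.card_image_of_injOn hinj).symm)
  intro b hb
  rw [← himg] at hb
  obtain ⟨a, ha, rfl⟩ := Finset.mem_image.mp hb
  rw [hji a ha]
  exact ⟨ha, rfl⟩

private lemma key_algebra {q aa : ℝ} (hq0 : 0 ≤ q) (hq1 : q < 1) {B c D : ℕ} (hc : c ≤ D) :
    aa * (1 - q ^ B) * (1 - q ^ (D + 1)) / (1 - q ^ (c + 1)) =
      aa * (1 - q ^ (B + c + 1)) * (1 - q ^ (D - c)) / (1 - q ^ (c + 1)) +
        aa * (q ^ (D - c) - q ^ B) := by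
  have hden : 1 - q ^ (c + 1) ≠ 0 := by
    have : q ^ (c + 1) < 1 := pow_lt_one₀ hq0 hq1 (Nat.succ_ne_zero c)
    linarith
  obtain ⟨e, rfl⟩ : ∃ e, D = e + c := ⟨D - c, by omega⟩
  rw [Nat.add_sub_cancel]
  field_simp
  ring

end Aux

/-- For every configuration of the sector, `S1(η) = S2(η)`:
`∑_p a_{r(p)}(1-q^{B_p})(1-q^{D_p+1})/(1-q^{C_p+1})
 = ∑_p a_{r(p)+1}(1-q^{A_p+1})(1-q^{E_p})/(1-q^{F_p+1})`. -/
theorem S1_eq_S2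
    {L N : ℕ} [NeZero L] [NeZero N] (hL : 2 ≤ L) (hN : 2 ≤ N)
    (m1 m2 : ℕ) (hm1 : 1 < m1) (hm1L : m1 < L) (hm2 : 1 ≤ m2) (hm2N : m2 < N)
    (hslope : m1 * N + m2 * L < L * N)
    (q : ℝ) (hq0 : 0 ≤ q) (hq1 : q < 1)
    (a : ZMod N → ℝ) (ha : ∀ t, 0 < a t)
    (η : Cfg L N) (hη : InSector m1 m2 η) :
    ∑ p ∈ particles η,
        a p.2 * (1 - q ^ dB η p) * (1 - q ^ (dD η p + 1)) / (1 - q ^ (dC η p + 1)) =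
      ∑ p ∈ particles η,
        a (p.2 + 1) * (1 - q ^ (dA η p + 1)) * (1 - q ^ dE η p) /
          (1 - q ^ (dF η p + 1)) := by
  classical
  obtain ⟨hint, -⟩ := hη
  have hrow : ∀ t : ZMod N, ∃ s : ZMod L, η (s, t) = true := by
    intro t
    have hc := hint.1 t
    have hpos : 0 < (Finset.univ.filter fun s : ZMod L => η (s, t) = true).card := by
      rw [hc]; omega
    obtain ⟨s, hs⟩ := Finset.card_pos.mp hpos
    exact ⟨s, (Finset.mem_filter.mp hs).2⟩
  have hmem : ∀ p : Site L N, p ∈ particles η ↔ η p = true := by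
    intro p; simp [particles]
  -- the maps p ↦ p₃, p ↦ p₆, p ↦ p₁, p ↦ p₄
  set i3 : Site L N → Site L N :=
    fun p => (p.1 - ((dC η p : ℕ) : ZMod L), p.2 - 1) with hi3
  set j6 : Site L N → Site L N :=
    fun p => (p.1 + ((dF η p : ℕ) : ZMod L), p.2 + 1) with hj6
  set i1 : Site L N → Site L N :=
    fun p => (p.1 + ((dA η p + 1 : ℕ) : ZMod L), p.2) with hi1
  set j4 : Site L N → Site L N :=
    fun p => (p.1 - ((dD η p + 1 : ℕ) : ZMod L), p.2) with hj4
  have hi3P : ∀ p ∈ particles η, i3 p ∈ particles η := by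
    rintro ⟨x, t⟩ hp
    rw [hmem] at hp ⊢
    exact (dC_spec hrow x t).1
  have h36 : ∀ p ∈ particles η, j6 (i3 p) = p := by
    rintro ⟨x, t⟩ hp
    rw [hmem] at hp
    show ((x - ((dC η (x, t) : ℕ) : ZMod L))
        + ((dF η (x - ((dC η (x, t) : ℕ) : ZMod L), t - 1) : ℕ) : ZMod L), (t - 1) + 1)
        = (x, t)
    rw [dF_sigma3 hrow hint hp, sub_add_cancel, sub_add_cancel]
  have h6P := finset_rightinv hi3P h36
  have hi1P : ∀ p ∈ particles η, i1 p ∈ particles η := by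
    rintro ⟨x, t⟩ hp
    rw [hmem] at hp ⊢
    exact (dA_spec hrow x t).1
  have h41 : ∀ p ∈ particles η, j4 (i1 p) = p := by
    rintro ⟨x, t⟩ hp
    rw [hmem] at hp
    show ((x + ((dA η (x, t) + 1 : ℕ) : ZMod L))
        - ((dD η (x + ((dA η (x, t) + 1 : ℕ) : ZMod L), t) + 1 : ℕ) : ZMod L), t) = (x, t)
    rw [dD_sigma1 hrow hp]
    rw [show x + ((dA η (x, t) + 1 : ℕ) : ZMod L) - ((dA η (x, t) + 1 : ℕ) : ZMod L) = x by ring]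
  have h4P := finset_rightinv hi1P h41
  -- the reindexed second sum
  have sum2 : ∑ p ∈ particles η,
      (fun r : Site L N => a (r.2 + 1) * (1 - q ^ (dA η r + 1)) * (1 - q ^ dE η r) /
        (1 - q ^ (dF η r + 1))) (i3 p)
      = ∑ p ∈ particles η,
        a (p.2 + 1) * (1 - q ^ (dA η p + 1)) * (1 - q ^ dE η p) / (1 - q ^ (dF η p + 1)) := by
    refine Finset.sum_nbij' i3 j6 hi3P (fun b hb => (h6P b hb).1)
      h36 (fun b hb => (h6P b hb).2) (fun p hp => rfl)
  -- per-particle identity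
  have step1 : ∀ p ∈ particles η,
      a p.2 * (1 - q ^ dB η p) * (1 - q ^ (dD η p + 1)) / (1 - q ^ (dC η p + 1))
      = (fun r : Site L N => a (r.2 + 1) * (1 - q ^ (dA η r + 1)) * (1 - q ^ dE η r) /
          (1 - q ^ (dF η r + 1))) (i3 p)
        + a p.2 * (q ^ (dD η p - dC η p) - q ^ dB η p) := by
    rintro ⟨x, t⟩ hp
    rw [hmem] at hp
    show a t * (1 - q ^ dB η (x, t)) * (1 - q ^ (dD η (x, t) + 1)) / (1 - q ^ (dC η (x, t) + 1))
      = a ((t - 1) + 1)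
          * (1 - q ^ (dA η (x - ((dC η (x, t) : ℕ) : ZMod L), t - 1) + 1))
          * (1 - q ^ dE η (x - ((dC η (x, t) : ℕ) : ZMod L), t - 1))
          / (1 - q ^ (dF η (x - ((dC η (x, t) : ℕ) : ZMod L), t - 1) + 1))
        + a t * (q ^ (dD η (x, t) - dC η (x, t)) - q ^ dB η (x, t))
    rw [dA_sigma3 hrow hint hp, dE_sigma3 hrow hint hp, dF_sigma3 hrow hint hp,
      sub_add_cancel]
    exact key_algebra hq0 hq1 (dC_le_dD hint hp)
  -- the telescoping sum vanishes
  have sum3 : ∑ p ∈ particles η, a p.2 * (q ^ (dD η p - dC η p) - q ^ dB η p) = 0 := by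
    have hb : ∑ p ∈ particles η, a p.2 * q ^ dB η p
        = ∑ p ∈ particles η, a p.2 * q ^ (dD η p - dC η p) := by
      refine Finset.sum_nbij' i1 j4 hi1P (fun b hb => (h4P b hb).1)
        h41 (fun b hb => (h4P b hb).2) ?_
      rintro ⟨x, t⟩ hp
      rw [hmem] at hp
      show a t * q ^ dB η (x, t)
        = a t * q ^ (dD η (x + ((dA η (x, t) + 1 : ℕ) : ZMod L), t)
            - dC η (x + ((dA η (x, t) + 1 : ℕ) : ZMod L), t))
      rw [dD_sigma1 hrow hp, dC_sigma1 hrow hint hp]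
      have hBA := dB_le_dA hint hp
      rw [show dA η (x, t) - (dA η (x, t) - dB η (x, t)) = dB η (x, t) by omega]
    calc ∑ p ∈ particles η, a p.2 * (q ^ (dD η p - dC η p) - q ^ dB η p)
        = ∑ p ∈ particles η,
            (a p.2 * q ^ (dD η p - dC η p) - a p.2 * q ^ dB η p) := by
          refine Finset.sum_congr rfl fun p _ => by ring
      _ = ∑ p ∈ particles η, a p.2 * q ^ (dD η p - dC η p)
            - ∑ p ∈ particles η, a p.2 * q ^ dB η p := Finset.sum_sub_distrib _ _
      _ = 0 := by rw [hb]; ring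
  calc ∑ p ∈ particles η,
        a p.2 * (1 - q ^ dB η p) * (1 - q ^ (dD η p + 1)) / (1 - q ^ (dC η p + 1))
      = ∑ p ∈ particles η,
          ((fun r : Site L N => a (r.2 + 1) * (1 - q ^ (dA η r + 1)) * (1 - q ^ dE η r) /
            (1 - q ^ (dF η r + 1))) (i3 p)
          + a p.2 * (q ^ (dD η p - dC η p) - q ^ dB η p)) :=
        Finset.sum_congr rfl step1
    _ = (∑ p ∈ particles η,
          (fun r : Site L N => a (r.2 + 1) * (1 - q ^ (dA η r + 1)) * (1 - q ^ dE η r) /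
            (1 - q ^ (dF η r + 1))) (i3 p))
        + ∑ p ∈ particles η, a p.2 * (q ^ (dD η p - dC η p) - q ^ dB η p) :=
        Finset.sum_add_distrib
    _ = ∑ p ∈ particles η,
          a (p.2 + 1) * (1 - q ^ (dA η p + 1)) * (1 - q ^ dE η p) /
            (1 - q ^ (dF η p + 1)) := by
        rw [sum2, sum3, add_zero]

end QWhittaker
end
end

section
/- Let η ∈ Ω_{L,N;m1,m2} and let p be a particle of η with B_p ≥ 1. Then the configuration obtained from η by shifting every particle of V_p^+ one step to the right (+e1) is again a valid interlacing configuration and lies in the same sector Ω_{L,N;m1,m2}: the interlacing constraints are preserved, as are the number m1 of particles per row and the sector parameter m2. -/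
/-!
Interlacing particle configurations on the discrete torus `T_{L,N}`,
the periodized `q`-Whittaker dynamics and its Gibbs measures
(Corwin–Toninelli, "A (2+1)-dimensional growth process with explicit
stationary measures").
-/

open scoped Classical

noncomputable section

namespace QWhittaker

variable {L N : ℕ}

section Aux

variable {L N : ℕ}

/-! generic helpers -/

lemma zcast_inj {n : ℕ} {a b : ℕ} (ha : a < n) (hb : b < n) (h : (a : ZMod n) = b) : a = b := by
  have := congrArg ZMod.val h
  rwa [ZMod.val_cast_of_lt ha, ZMod.val_cast_of_lt hb] at this

lemma zcast_ne {n : ℕ} {a b : ℕ} (ha : a < n) (hb : b < n) (h : a ≠ b) :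
    (a : ZMod n) ≠ (b : ZMod n) := fun hc => h (zcast_inj ha hb hc)

lemma natCast_val' {n : ℕ} [NeZero n] (a : ZMod n) : ((a.val : ℕ) : ZMod n) = a :=
  (ZMod.natCast_val a).trans (ZMod.cast_id n a)

lemma sInf_eq_of {T : ℕ → Prop} {d : ℕ} (hd : T d) (hlt : ∀ k < d, ¬ T k) :
    sInf {k | T k} = d := by
  refine le_antisymm (Nat.sInf_le hd) ?_
  by_contra h
  push_neg at h
  exact hlt _ h (Nat.sInf_mem ⟨d, hd⟩)

lemma card_filter_eq_one_iff {α : Type*} (s : Finset α) (P : α → Prop) [DecidablePred P] :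
    (s.filter P).card = 1 ↔ ∃ a, (a ∈ s ∧ P a) ∧ ∀ b, b ∈ s → P b → b = a := by
  rw [Finset.card_eq_one]
  constructor
  · rintro ⟨a, ha⟩
    have hmem : a ∈ s.filter P := ha ▸ Finset.mem_singleton_self a
    rw [Finset.mem_filter] at hmem
    refine ⟨a, ⟨hmem.1, hmem.2⟩, fun b hb hPb => ?_⟩
    have : b ∈ s.filter P := Finset.mem_filter.mpr ⟨hb, hPb⟩
    rw [ha, Finset.mem_singleton] at this
    exact this
  · rintro ⟨a, ⟨has, hPa⟩, huniq⟩
    refine ⟨a, Finset.ext fun b => ?_⟩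
    simp only [Finset.mem_filter, Finset.mem_singleton]
    exact ⟨fun ⟨h1, h2⟩ => huniq b h1 h2, fun h => h ▸ ⟨has, hPa⟩⟩

/-! Vplus lemmas -/

lemma mem_Vplus_iff {η : Cfg L N} {p : Site L N} {z : Site L N} :
    z ∈ Vplus η p ↔ ∃ j : ℕ, z.1 = p.1 ∧ z.2 = p.2 + (j : ZMod N) ∧
      ∀ i : ℕ, i ≤ j → η (p.1, p.2 + (i : ZMod N)) = true := by
  unfold Vplus
  simp only [Set.mem_setOf_eq, Prod.ext_iff]
  tauto

lemma Vplus_fst {η : Cfg L N} {p z : Site L N} (h : z ∈ Vplus η p) : z.1 = p.1 :=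
  (mem_Vplus_iff.mp h).choose_spec.1

lemma Vplus_particle {η : Cfg L N} {p z : Site L N} (h : z ∈ Vplus η p) : η z = true := by
  obtain ⟨j, h1, h2, h3⟩ := mem_Vplus_iff.mp h
  have := h3 j le_rfl
  rwa [← h2, ← h1, Prod.mk.eta] at this

lemma Vplus_self {η : Cfg L N} {p : Site L N} (hp : η p = true) : p ∈ Vplus η p := by
  refine ⟨0, by simp, fun i hi => ?_⟩
  interval_cases i
  simpa using hp

lemma Vplus_up {η : Cfg L N} {p : Site L N} {t : ZMod N} (h : (p.1, t) ∈ Vplus η p)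
    (h2 : η (p.1, t + 1) = true) : (p.1, t + 1) ∈ Vplus η p := by
  obtain ⟨j, _, hj2, hj3⟩ := mem_Vplus_iff.mp h
  simp only at hj2
  refine ⟨j + 1, ?_, fun i hi => ?_⟩
  · simp only [Prod.mk.injEq, true_and]
    rw [hj2]; push_cast; ring
  · rcases Nat.lt_or_ge i (j + 1) with hlt | hge
    · exact hj3 i (Nat.lt_succ_iff.mp hlt)
    · have hij : i = j + 1 := le_antisymm hi hge
      subst hij
      have he : p.2 + ((j + 1 : ℕ) : ZMod N) = t + 1 := by rw [hj2]; push_cast; ring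
      rw [he]; exact h2

lemma Vplus_down {η : Cfg L N} {p : Site L N} {t : ZMod N} (h : (p.1, t) ∈ Vplus η p)
    (ht : t ≠ p.2) : (p.1, t - 1) ∈ Vplus η p := by
  obtain ⟨j, _, hj2, hj3⟩ := mem_Vplus_iff.mp h
  simp only at hj2
  have hj0 : j ≠ 0 := by
    rintro rfl
    simp at hj2
    exact ht hj2
  obtain ⟨j', rfl⟩ := Nat.exists_eq_succ_of_ne_zero hj0
  refine ⟨j', ?_, fun i hi => hj3 i (hi.trans (Nat.le_succ j'))⟩
  simp only [Prod.mk.injEq, true_and]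
  rw [hj2]
  push_cast
  ring

lemma moveR_true_iff {η : Cfg L N} {p z : Site L N} :
    moveR η p z = true ↔ ((η z = true ∧ z ∉ Vplus η p) ∨ (z.1 - 1, z.2) ∈ Vplus η p) := by
  simp [moveR]


/-! gap lemmas -/


lemma sInf_pos_eq {T : ℕ → Prop} {d : ℕ} (hd0 : 0 < d) (hT : T d)
    (hlt : ∀ k, 0 < k → k < d → ¬ T k) : sInf {k | 0 < k ∧ T k} = d :=
  sInf_eq_of ⟨hd0, hT⟩ (fun k hk hmem => hlt k hmem.1 hk hmem.2)

lemma right_gap [NeZero L] {η : Cfg L N} {t : ZMod N}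
    (h2 : ∃ s₁ s₂ : ZMod L, s₁ ≠ s₂ ∧ η (s₁, t) = true ∧ η (s₂, t) = true) (z : ZMod L) :
    ∃ d : ℕ, sInf {k : ℕ | 0 < k ∧ η (z + (k : ZMod L), t) = true} = d ∧
      0 < d ∧ d < L ∧ η (z + (d : ZMod L), t) = true ∧
      ∀ k, 0 < k → k < d → η (z + (k : ZMod L), t) = false := by
  obtain ⟨s₁, s₂, hne, h1, h2'⟩ := h2
  have hex : ∃ s : ZMod L, s ≠ z ∧ η (s, t) = true := by
    by_cases hz : s₁ = z
    · exact ⟨s₂, fun hc => hne (hz.trans hc.symm), h2'⟩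
    · exact ⟨s₁, hz, h1⟩
  obtain ⟨s, hsz, hs⟩ := hex
  set S := {k : ℕ | 0 < k ∧ η (z + (k : ZMod L), t) = true} with hS
  have hkmem : (s - z).val ∈ S := by
    constructor
    · have : (s - z).val ≠ 0 := by
        simp only [ne_eq, ZMod.val_eq_zero]
        exact sub_ne_zero.mpr hsz
      omega
    · rw [natCast_val', add_sub_cancel]
      exact hs
  have hdmem := Nat.sInf_mem ⟨_, hkmem⟩
  refine ⟨sInf S, rfl, hdmem.1, lt_of_le_of_lt (Nat.sInf_le hkmem) (ZMod.val_lt _),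
    hdmem.2, fun k h0 hk => ?_⟩
  have hnm := Nat.notMem_of_lt_sInf hk
  rw [hS, Set.mem_setOf_eq] at hnm
  by_contra hc
  exact hnm ⟨h0, by simpa using hc⟩

lemma left_gap [NeZero L] {η : Cfg L N} {t : ZMod N}
    (h2 : ∃ s₁ s₂ : ZMod L, s₁ ≠ s₂ ∧ η (s₁, t) = true ∧ η (s₂, t) = true) (z : ZMod L) :
    ∃ d : ℕ, sInf {k : ℕ | 0 < k ∧ η (z - (k : ZMod L), t) = true} = d ∧
      0 < d ∧ d < L ∧ η (z - (d : ZMod L), t) = true ∧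
      ∀ k, 0 < k → k < d → η (z - (k : ZMod L), t) = false := by
  obtain ⟨s₁, s₂, hne, h1, h2'⟩ := h2
  have hex : ∃ s : ZMod L, s ≠ z ∧ η (s, t) = true := by
    by_cases hz : s₁ = z
    · exact ⟨s₂, fun hc => hne (hz.trans hc.symm), h2'⟩
    · exact ⟨s₁, hz, h1⟩
  obtain ⟨s, hsz, hs⟩ := hex
  set S := {k : ℕ | 0 < k ∧ η (z - (k : ZMod L), t) = true} with hS
  have hkmem : (z - s).val ∈ S := by
    constructor
    · have : (z - s).val ≠ 0 := by
        simp only [ne_eq, ZMod.val_eq_zero]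
        exact sub_ne_zero.mpr (Ne.symm hsz)
      omega
    · rw [natCast_val', sub_sub_cancel]
      exact hs
  have hdmem := Nat.sInf_mem ⟨_, hkmem⟩
  refine ⟨sInf S, rfl, hdmem.1, lt_of_le_of_lt (Nat.sInf_le hkmem) (ZMod.val_lt _),
    hdmem.2, fun k h0 hk => ?_⟩
  have hnm := Nat.notMem_of_lt_sInf hk
  rw [hS, Set.mem_setOf_eq] at hnm
  by_contra hc
  exact hnm ⟨h0, by simpa using hc⟩

lemma f_gap [NeZero L] {η : Cfg L N} {t : ZMod N}
    (h1 : ∃ s : ZMod L, η (s, t) = true) (z : ZMod L) :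
    ∃ d : ℕ, sInf {k : ℕ | η (z + (k : ZMod L), t) = true} = d ∧
      d < L ∧ η (z + (d : ZMod L), t) = true ∧
      ∀ k, k < d → η (z + (k : ZMod L), t) = false := by
  obtain ⟨s, hs⟩ := h1
  set S := {k : ℕ | η (z + (k : ZMod L), t) = true} with hS
  have hkmem : (s - z).val ∈ S := by
    rw [hS, Set.mem_setOf_eq, natCast_val', add_sub_cancel]
    exact hs
  have hdmem := Nat.sInf_mem (⟨_, hkmem⟩ : S.Nonempty)
  refine ⟨sInf S, rfl, lt_of_le_of_lt (Nat.sInf_le hkmem) (ZMod.val_lt _),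
    hdmem, fun k hk => ?_⟩
  have hnm := Nat.notMem_of_lt_sInf hk
  rw [hS, Set.mem_setOf_eq] at hnm
  by_contra hc
  exact hnm (by simpa using hc)

lemma AOne_intro [NeZero L] [NeZero N] (σ : Cfg L N) (q : Site L N) (d : ℕ) (hd : 0 < d)
    (hT : σ (q.1 + (d : ZMod L), q.2) = true)
    (hlt : ∀ k, 0 < k → k < d → σ (q.1 + (k : ZMod L), q.2) = false)
    (k₀ : ℕ) (hk1 : 1 ≤ k₀) (hk2 : k₀ ≤ d) (hk3 : σ (q.1 + (k₀ : ZMod L), q.2 - 1) = true)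
    (huniq : ∀ k, 1 ≤ k → k ≤ d → σ (q.1 + (k : ZMod L), q.2 - 1) = true → k = k₀) :
    ((Finset.Icc 1 (dA σ q + 1)).filter
        fun k : ℕ => σ (q.1 + (k : ZMod L), q.2 - 1) = true).card = 1 := by
  have h1 : sInf {k : ℕ | 0 < k ∧ σ (q.1 + (k : ZMod L), q.2) = true} = d :=
    sInf_pos_eq hd hT (fun k h0 hk hc => by simp [hlt k h0 hk] at hc)
  have hda : dA σ q + 1 = d := by
    unfold dA
    rw [h1]
    omega
  rw [hda, card_filter_eq_one_iff]
  exact ⟨k₀, ⟨Finset.mem_Icc.mpr ⟨hk1, hk2⟩, hk3⟩, fun b hb hPb =>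
    huniq b (Finset.mem_Icc.mp hb).1 (Finset.mem_Icc.mp hb).2 hPb⟩

lemma DOne_intro [NeZero L] [NeZero N] (σ : Cfg L N) (q : Site L N) (d : ℕ) (hd : 0 < d)
    (hT : σ (q.1 - (d : ZMod L), q.2) = true)
    (hlt : ∀ k, 0 < k → k < d → σ (q.1 - (k : ZMod L), q.2) = false)
    (j₀ : ℕ) (hj2 : j₀ ≤ d - 1) (hj3 : σ (q.1 - (j₀ : ZMod L), q.2 - 1) = true)
    (huniq : ∀ j, j ≤ d - 1 → σ (q.1 - (j : ZMod L), q.2 - 1) = true → j = j₀) :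
    ((Finset.Icc 0 (dD σ q)).filter
        fun k : ℕ => σ (q.1 - (k : ZMod L), q.2 - 1) = true).card = 1 := by
  have h1 : sInf {k : ℕ | 0 < k ∧ σ (q.1 - (k : ZMod L), q.2) = true} = d :=
    sInf_pos_eq hd hT (fun k h0 hk hc => by simp [hlt k h0 hk] at hc)
  have hdd : dD σ q = d - 1 := by
    unfold dD
    rw [h1]
  rw [hdd, card_filter_eq_one_iff]
  exact ⟨j₀, ⟨Finset.mem_Icc.mpr ⟨Nat.zero_le _, hj2⟩, hj3⟩, fun b hb hPb =>
    huniq b (Finset.mem_Icc.mp hb).2 hPb⟩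

lemma AOne_elim [NeZero L] [NeZero N] {σ : Cfg L N} {q : Site L N}
    (h2 : ∃ s₁ s₂ : ZMod L, s₁ ≠ s₂ ∧ σ (s₁, q.2) = true ∧ σ (s₂, q.2) = true)
    (hcard : ((Finset.Icc 1 (dA σ q + 1)).filter
        fun k : ℕ => σ (q.1 + (k : ZMod L), q.2 - 1) = true).card = 1) :
    ∃ a : ℕ, dA σ q + 1 = a ∧ 0 < a ∧ a < L ∧ σ (q.1 + (a : ZMod L), q.2) = true ∧
      (∀ k, 0 < k → k < a → σ (q.1 + (k : ZMod L), q.2) = false) ∧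
      ∃ k₀, (1 ≤ k₀ ∧ k₀ ≤ a ∧ σ (q.1 + (k₀ : ZMod L), q.2 - 1) = true) ∧
        ∀ k, 1 ≤ k → k ≤ a → σ (q.1 + (k : ZMod L), q.2 - 1) = true → k = k₀ := by
  obtain ⟨d, hsinf, hd0, hdL, hdT, hdlt⟩ := right_gap h2 q.1
  have hda : dA σ q + 1 = d := by
    unfold dA
    rw [hsinf]
    omega
  rw [hda, card_filter_eq_one_iff] at hcard
  obtain ⟨k₀, ⟨hk₀mem, hk₀P⟩, huniq⟩ := hcard
  exact ⟨d, hda, hd0, hdL, hdT, hdlt, k₀,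
    ⟨(Finset.mem_Icc.mp hk₀mem).1, (Finset.mem_Icc.mp hk₀mem).2, hk₀P⟩,
    fun k h1 h2 h3 => huniq k (Finset.mem_Icc.mpr ⟨h1, h2⟩) h3⟩

lemma Dcond_generic [NeZero L] [NeZero N] {σ : Cfg L N}
    (hrow2 : ∀ t : ZMod N, ∃ s₁ s₂ : ZMod L, s₁ ≠ s₂ ∧ σ (s₁, t) = true ∧ σ (s₂, t) = true)
    (hA : ∀ q : Site L N, σ q = true → ((Finset.Icc 1 (dA σ q + 1)).filter
        fun k : ℕ => σ (q.1 + (k : ZMod L), q.2 - 1) = true).card = 1)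
    (q : Site L N) (hq : σ q = true) :
    ((Finset.Icc 0 (dD σ q)).filter
        fun k : ℕ => σ (q.1 - (k : ZMod L), q.2 - 1) = true).card = 1 := by
  obtain ⟨d, hsinf, hd0, hdL, hdT, hdlt⟩ := left_gap (hrow2 q.2) q.1
  set l : Site L N := (q.1 - (d : ZMod L), q.2) with hl
  have hlsite : ∀ k : ℕ, k ≤ d → l.1 + (k : ZMod L) = q.1 - ((d - k : ℕ) : ZMod L) := by
    intro k hk
    rw [Nat.cast_sub hk]
    simp only [hl]
    ring
  have hda : dA σ l + 1 = d := by
    have h1 : sInf {k : ℕ | 0 < k ∧ σ (l.1 + (k : ZMod L), l.2) = true} = d := by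
      refine sInf_pos_eq hd0 ?_ ?_
      · rw [hlsite d le_rfl]
        simpa [hl] using hq
      · intro k h0 hk hc
        rw [hlsite k hk.le] at hc
        rw [hdlt (d - k) (by omega) (by omega)] at hc
        exact Bool.false_ne_true hc
    unfold dA
    rw [h1]
    omega
  have hAl := hA l hdT
  rw [hda, card_filter_eq_one_iff] at hAl
  obtain ⟨k₀, ⟨hk₀mem, hk₀P⟩, huniq⟩ := hAl
  obtain ⟨hk₀1, hk₀2⟩ := Finset.mem_Icc.mp hk₀mem
  refine DOne_intro σ q d hd0 hdT hdlt (d - k₀) (by omega) ?_ ?_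
  · have := hlsite k₀ hk₀2
    rw [← this]
    simpa [hl] using hk₀P
  · intro j hj hPj
    have hkd : d - j ≤ d := by omega
    have : d - j = k₀ := by
      refine huniq (d - j) (Finset.mem_Icc.mpr ⟨by omega, hkd⟩) ?_
      rw [hlsite (d - j) hkd]
      have : d - (d - j) = j := by omega
      rw [this]
      simpa [hl] using hPj
    omega

lemma filter_singleton_true {P : ℕ → Prop} [DecidablePred P] {a : ℕ}
    (h : ((Finset.Icc a a).filter P).card = 1) : P a := by
  rw [card_filter_eq_one_iff] at h
  obtain ⟨b, ⟨hb, hPb⟩, _⟩ := h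
  rw [Finset.mem_Icc] at hb
  have : b = a := le_antisymm hb.2 hb.1
  exact this ▸ hPb

lemma one_ne_zero' (hL : 2 ≤ L) : (1 : ZMod L) ≠ 0 := by
  have := zcast_ne (n := L) (a := 1) (b := 0) (by omega) (by omega) one_ne_zero
  simpa using this

lemma add_one_ne (hL : 2 ≤ L) (z : ZMod L) : z + 1 ≠ z := by
  intro h
  exact one_ne_zero' hL (by rwa [add_eq_left] at h)

lemma row_two [NeZero L] [NeZero N] {m1 : ℕ} {η : Cfg L N} (hm1 : 1 < m1)
    (hrow : ∀ t : ZMod N, (Finset.univ.filter fun s : ZMod L => η (s, t) = true).card = m1)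
    (t : ZMod N) : ∃ s₁ s₂ : ZMod L, s₁ ≠ s₂ ∧ η (s₁, t) = true ∧ η (s₂, t) = true := by
  have h := hrow t
  have : 1 < (Finset.univ.filter fun s : ZMod L => η (s, t) = true).card := by omega
  obtain ⟨a, ha, b, hb, hab⟩ := Finset.one_lt_card.mp this
  rw [Finset.mem_filter] at ha hb
  exact ⟨a, b, hab, ha.2, hb.2⟩

lemma dB_one [NeZero L] [NeZero N] {η : Cfg L N} {p : Site L N} (hB : 1 ≤ dB η p) :
    η (p.1 + 1, p.2 - 1) = false := by
  by_contra hc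
  rw [Bool.not_eq_false] at hc
  have hmem : 1 ∈ {k : ℕ | 0 < k ∧ η (p.1 + (k : ZMod L), p.2 - 1) = true} :=
    ⟨one_pos, by simpa using hc⟩
  have := Nat.sInf_le hmem
  unfold dB at hB
  omega

lemma lemA [NeZero L] [NeZero N] {m1 : ℕ} {η : Cfg L N} {p : Site L N}
    (hIl : Interlaced m1 η) (hp : η p = true) (hB : 1 ≤ dB η p) :
    ∀ t : ZMod N, (p.1, t) ∈ Vplus η p → η (p.1 + 1, t) = false := by
  have hB1 := dB_one hB
  suffices h : ∀ j : ℕ, (∀ i : ℕ, i ≤ j → η (p.1, p.2 + (i : ZMod N)) = true) →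
      η (p.1 + 1, p.2 + (j : ZMod N)) = false by
    intro t hmem
    obtain ⟨j, _, hsnd, hall⟩ := mem_Vplus_iff.mp hmem
    simp only at hsnd
    rw [hsnd]
    exact h j hall
  intro j
  induction j with
  | zero =>
    intro _
    by_contra hc
    rw [Bool.not_eq_false] at hc
    simp only [Nat.cast_zero, add_zero] at hc ⊢
    have h1 : sInf {k : ℕ | 0 < k ∧ η (p.1 + (k : ZMod L), p.2) = true} = 1 := by
      refine sInf_pos_eq one_pos (by simpa using hc) (fun k h0 hk _ => absurd h0 (by omega))
    have hda : dA η p = 0 := by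
      unfold dA
      rw [h1]
    have hcard := (hIl.2 p hp).1
    rw [hda] at hcard
    have := filter_singleton_true hcard
    rw [Nat.cast_one] at this
    rw [this] at hB1
    simp at hB1
  | succ j ih =>
    intro hall
    by_contra hc
    rw [Bool.not_eq_false] at hc
    have hIH : η (p.1 + 1, p.2 + (j : ZMod N)) = false :=
      ih (fun i hi => hall i (hi.trans (Nat.le_succ j)))
    set q : Site L N := (p.1 + 1, p.2 + ((j + 1 : ℕ) : ZMod N)) with hq
    have hdd : dD η q = 0 := by
      have h1 : sInf {k : ℕ | 0 < k ∧ η (q.1 - (k : ZMod L), q.2) = true} = 1 := by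
        refine sInf_pos_eq one_pos ?_ (fun k h0 hk _ => absurd h0 (by omega))
        have : q.1 - ((1 : ℕ) : ZMod L) = p.1 := by
          simp [hq]
        rw [this]
        exact hall (j + 1) le_rfl
      unfold dD
      rw [h1]
    have hcard := (hIl.2 q hc).2
    rw [hdd] at hcard
    have hP := filter_singleton_true hcard
    have h2 : q.1 - ((0 : ℕ) : ZMod L) = p.1 + 1 := by simp [hq]
    have h3 : q.2 - 1 = p.2 + (j : ZMod N) := by
      simp only [hq]
      push_cast
      ring
    rw [h2, h3] at hP
    rw [hP] at hIH
    simp at hIH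

lemma lemB [NeZero L] [NeZero N] {m1 : ℕ} {η : Cfg L N} {p : Site L N}
    (hIl : Interlaced m1 η) (hp : η p = true) (hB : 1 ≤ dB η p) :
    ∀ t : ZMod N, (p.1, t) ∈ Vplus η p → η (p.1 + 1, t - 1) = false := by
  intro t hmem
  by_cases hbelow : (p.1, t - 1) ∈ Vplus η p
  · exact lemA hIl hp hB _ hbelow
  · have ht : t = p.2 := by
      by_contra hne
      exact hbelow (Vplus_down hmem hne)
    rw [ht]
    exact dB_one hB

lemma moveR_at_x (hL : 2 ≤ L) {η : Cfg L N} {p : Site L N} (t : ZMod N) :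
    moveR η p (p.1, t) = true ↔ (η (p.1, t) = true ∧ (p.1, t) ∉ Vplus η p) := by
  rw [moveR_true_iff]
  constructor
  · rintro (h | h)
    · exact h
    · exfalso
      have := Vplus_fst h
      simp only at this
      exact one_ne_zero' hL (by rwa [sub_eq_self] at this)
  · exact Or.inl

lemma moveR_at_x1 (hL : 2 ≤ L) {η : Cfg L N} {p : Site L N} (t : ZMod N) :
    moveR η p (p.1 + 1, t) = true ↔ (η (p.1 + 1, t) = true ∨ (p.1, t) ∈ Vplus η p) := by
  rw [moveR_true_iff]
  have h1 : (p.1 + 1 - 1, t) = (p.1, t) := by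
    simp
  rw [h1]
  constructor
  · rintro (h | h)
    · exact Or.inl h.1
    · exact Or.inr h
  · rintro (h | h)
    · refine Or.inl ⟨h, fun hc => ?_⟩
      exact add_one_ne hL p.1 (Vplus_fst hc)
    · exact Or.inr h

lemma moveR_other (hL : 2 ≤ L) {η : Cfg L N} {p : Site L N} {s : ZMod L}
    (hs : s ≠ p.1) (hs1 : s ≠ p.1 + 1) (t : ZMod N) :
    moveR η p (s, t) = true ↔ η (s, t) = true := by
  rw [moveR_true_iff]
  constructor
  · rintro (h | h)
    · exact h.1
    · exfalso
      have h2 := eq_add_of_sub_eq (Vplus_fst h)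
      simp only at h2
      exact hs1 h2
  · intro h
    exact Or.inl ⟨h, fun hc => hs (Vplus_fst hc)⟩

lemma row_changed (hL : 2 ≤ L) [NeZero L] [NeZero N] {m1 : ℕ} {η : Cfg L N} {p : Site L N}
    (hIl : Interlaced m1 η) (hp : η p = true) (hB : 1 ≤ dB η p)
    {t : ZMod N} (hVt : (p.1, t) ∈ Vplus η p) :
    moveR η p (p.1, t) = false ∧ moveR η p (p.1 + 1, t) = true ∧
      ∀ s : ZMod L, s ≠ p.1 → s ≠ p.1 + 1 → (moveR η p (s, t) = true ↔ η (s, t) = true) := by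
  refine ⟨?_, (moveR_at_x1 hL t).mpr (Or.inr hVt), fun s h1 h2 => moveR_other hL h1 h2 t⟩
  rw [Bool.eq_false_iff]
  intro hc
  exact ((moveR_at_x hL t).mp hc).2 hVt

lemma row_unchanged (hL : 2 ≤ L) {η : Cfg L N} {p : Site L N}
    {t : ZMod N} (hVt : (p.1, t) ∉ Vplus η p) (s : ZMod L) :
    moveR η p (s, t) = true ↔ η (s, t) = true := by
  by_cases h1 : s = p.1
  · subst h1
    rw [moveR_at_x hL t]
    exact ⟨fun h => h.1, fun h => ⟨h, hVt⟩⟩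
  · by_cases h2 : s = p.1 + 1
    · subst h2
      rw [moveR_at_x1 hL t]
      exact ⟨fun h => h.resolve_right hVt, Or.inl⟩
    · exact moveR_other hL h1 h2 t

lemma rows_moveR (hL : 2 ≤ L) [NeZero L] [NeZero N] {m1 : ℕ} {η : Cfg L N} {p : Site L N}
    (hm1 : 1 < m1) (hIl : Interlaced m1 η) (hp : η p = true) (hB : 1 ≤ dB η p)
    (t : ZMod N) :
    (Finset.univ.filter fun s : ZMod L => moveR η p (s, t) = true).card = m1 := by
  by_cases hVt : (p.1, t) ∈ Vplus η p
  · obtain ⟨hx, hx1, hoth⟩ := row_changed hL hIl hp hB hVt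
    have hset : (Finset.univ.filter fun s : ZMod L => moveR η p (s, t) = true) =
        insert (p.1 + 1) ((Finset.univ.filter fun s : ZMod L => η (s, t) = true).erase p.1) := by
      ext s
      simp only [Finset.mem_insert, Finset.mem_erase, Finset.mem_filter, Finset.mem_univ,
        true_and]
      by_cases h1 : s = p.1
      · subst h1
        simp only [hx]
        constructor
        · intro h
          simp at h
        · rintro (h | h)
          · exact absurd h (add_one_ne hL p.1).symm
          · exact absurd rfl h.1
      · by_cases h2 : s = p.1 + 1
        · subst h2
          simp [hx1]
        · rw [hoth s h1 h2]
          constructor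
          · exact fun h => Or.inr ⟨h1, h⟩
          · rintro (h | h)
            · exact absurd h h2
            · exact h.2
    rw [hset]
    have hx1notin : p.1 + 1 ∉ (Finset.univ.filter fun s : ZMod L => η (s, t) = true).erase p.1 := by
      intro hc
      have := (Finset.mem_erase.mp hc).2
      rw [Finset.mem_filter] at this
      rw [lemA hIl hp hB t hVt] at this
      simp at this
    rw [Finset.card_insert_of_notMem hx1notin,
      Finset.card_erase_of_mem (by
        rw [Finset.mem_filter]
        exact ⟨Finset.mem_univ _, Vplus_particle hVt⟩), hIl.1 t]
    omega
  · have hset : (Finset.univ.filter fun s : ZMod L => moveR η p (s, t) = true) =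
        (Finset.univ.filter fun s : ZMod L => η (s, t) = true) := by
      ext s
      simp only [Finset.mem_filter, Finset.mem_univ, true_and]
      rw [row_unchanged hL hVt s]
    rw [hset]
    exact hIl.1 t

lemma add_cast_inj {n : ℕ} {z : ZMod n} {a b : ℕ} (ha : a < n) (hb : b < n)
    (h : z + (a : ZMod n) = z + (b : ZMod n)) : a = b :=
  zcast_inj ha hb (add_left_cancel h)

lemma moveR_other_eq (hL : 2 ≤ L) {η : Cfg L N} {p : Site L N} {s : ZMod L}
    (hs : s ≠ p.1) (hs1 : s ≠ p.1 + 1) (t : ZMod N) :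
    moveR η p (s, t) = η (s, t) := by
  have h := moveR_other hL hs hs1 (η := η) (p := p) t
  cases hv : η (s, t)
  · rw [Bool.eq_false_iff]
    intro hc
    rw [h, hv] at hc
    exact Bool.false_ne_true hc
  · exact h.mpr hv

lemma row_unchanged_eq (hL : 2 ≤ L) {η : Cfg L N} {p : Site L N}
    {t : ZMod N} (hVt : (p.1, t) ∉ Vplus η p) (s : ZMod L) :
    moveR η p (s, t) = η (s, t) := by
  have h := row_unchanged hL hVt s
  cases hv : η (s, t)
  · rw [Bool.eq_false_iff]
    intro hc
    rw [h, hv] at hc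
    exact Bool.false_ne_true hc
  · exact h.mpr hv

lemma Acond_moveR (hL : 2 ≤ L) [NeZero L] [NeZero N] {m1 : ℕ} {η : Cfg L N} {p : Site L N}
    (hm1 : 1 < m1) (hIl : Interlaced m1 η) (hp : η p = true) (hB : 1 ≤ dB η p)
    (q : Site L N) (hq : moveR η p q = true) :
    ((Finset.Icc 1 (dA (moveR η p) q + 1)).filter
        fun k : ℕ => moveR η p (q.1 + (k : ZMod L), q.2 - 1) = true).card = 1 := by
  obtain ⟨s, t⟩ := q
  by_cases hM : s = p.1 + 1 ∧ (p.1, t) ∈ Vplus η p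
  · -- the moved particle
    obtain ⟨rfl, hVt⟩ := hM
    have hqold : η (p.1, t) = true := Vplus_particle hVt
    obtain ⟨a, hda, ha0, haL, haT, halt, k₀, ⟨hk₀1, hk₀2, hk₀T⟩, hk₀u⟩ :=
      AOne_elim (row_two hm1 hIl.1 t) ((hIl.2 (p.1, t) hqold).1)
    have hxf : η (p.1 + 1, t) = false := lemA hIl hp hB t hVt
    have hx1b : η (p.1 + 1, t - 1) = false := lemB hIl hp hB t hVt
    have ha2 : 2 ≤ a := by
      by_contra hc
      have ha1 : a = 1 := by omega
      rw [ha1, Nat.cast_one] at haT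
      rw [haT] at hxf
      simp at hxf
    have hk₀2' : 2 ≤ k₀ := by
      by_contra hc
      have hk1 : k₀ = 1 := by omega
      rw [hk1, Nat.cast_one] at hk₀T
      rw [hk₀T] at hx1b
      simp at hx1b
    have hcast : ∀ k : ℕ, 1 ≤ k → (p.1 + 1) + ((k - 1 : ℕ) : ZMod L) = p.1 + (k : ZMod L) := by
      intro k hk
      rw [Nat.cast_sub hk, Nat.cast_one]
      ring
    refine AOne_intro (moveR η p) (p.1 + 1, t) (a - 1) (by omega) ?_ ?_ (k₀ - 1)
      (by omega) (by omega) ?_ ?_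
    · rw [hcast a (by omega)]
      rw [moveR_other_eq hL ?_ ?_ t]
      · exact haT
      · intro hc
        exact (zcast_ne haL (by omega) (by omega) : (a : ZMod L) ≠ ((0:ℕ) : ZMod L))
          (by simpa using add_left_cancel (hc.trans (add_zero p.1).symm))
      · intro hc
        have : a = 1 := by
          refine zcast_inj haL (by omega) ?_
          rw [Nat.cast_one]
          exact add_left_cancel hc
        omega
    · intro k h0 hk
      have hsite : (p.1 + 1) + (k : ZMod L) = p.1 + ((k + 1 : ℕ) : ZMod L) := by
        push_cast
        ring
      rw [hsite, moveR_other_eq hL ?_ ?_ t]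
      · exact halt (k + 1) (by omega) (by omega)
      · intro hc
        have : k + 1 = 0 := by
          refine zcast_inj (n := L) (a := k + 1) (b := 0) (by omega) (by omega) ?_
          rw [Nat.cast_zero]
          exact add_left_cancel (hc.trans (add_zero p.1).symm)
        omega
      · intro hc
        have : k + 1 = 1 := by
          refine zcast_inj (n := L) (a := k + 1) (b := 1) (by omega) (by omega) ?_
          rw [Nat.cast_one]
          exact add_left_cancel hc
        omega
    · rw [hcast k₀ (by omega), moveR_other_eq hL ?_ ?_ (t - 1)]
      · exact hk₀T
      · intro hc
        have : k₀ = 0 := by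
          refine zcast_inj (n := L) (a := k₀) (b := 0) (by omega) (by omega) ?_
          rw [Nat.cast_zero]
          exact add_left_cancel (hc.trans (add_zero p.1).symm)
        omega
      · intro hc
        have : k₀ = 1 := by
          refine zcast_inj (n := L) (a := k₀) (b := 1) (by omega) (by omega) ?_
          rw [Nat.cast_one]
          exact add_left_cancel hc
        omega
    · intro k h1 hk2 hkT
      have hsite : (p.1 + 1) + (k : ZMod L) = p.1 + ((k + 1 : ℕ) : ZMod L) := by
        push_cast
        ring
      rw [hsite, moveR_other_eq hL ?_ ?_ (t - 1)] at hkT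
      · have := hk₀u (k + 1) (by omega) (by omega) hkT
        omega
      · intro hc
        have : k + 1 = 0 := by
          refine zcast_inj (n := L) (a := k + 1) (b := 0) (by omega) (by omega) ?_
          rw [Nat.cast_zero]
          exact add_left_cancel (hc.trans (add_zero p.1).symm)
        omega
      · intro hc
        have : k + 1 = 1 := by
          refine zcast_inj (n := L) (a := k + 1) (b := 1) (by omega) (by omega) ?_
          rw [Nat.cast_one]
          exact add_left_cancel hc
        omega
  · -- untouched particle
    have hU : η (s, t) = true ∧ (s, t) ∉ Vplus η p := by
      by_cases h1 : s = p.1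
      · subst h1
        exact (moveR_at_x hL t).mp hq
      · by_cases h2 : s = p.1 + 1
        · subst h2
          rcases (moveR_at_x1 hL t).mp hq with h | h
          · refine ⟨h, fun hc => ?_⟩
            have hf := Vplus_fst hc
            simp only at hf
            exact add_one_ne hL p.1 hf
          · exact absurd ⟨rfl, h⟩ hM
        · exact ⟨(moveR_other hL h1 h2 t).mp hq, fun hc => h1 (Vplus_fst hc)⟩
    obtain ⟨hqη, hnV⟩ := hU
    obtain ⟨a, hda, ha0, haL, haT, halt, k₀, ⟨hk₀1, hk₀2, hk₀T⟩, hk₀u⟩ :=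
      AOne_elim (row_two hm1 hIl.1 t) ((hIl.2 (s, t) hqη).1)
    by_cases hVt : (p.1, t) ∈ Vplus η p
    · have hsx : s ≠ p.1 := fun hc => hnV (by rw [hc]; exact hVt)
      have hxf : η (p.1 + 1, t) = false := lemA hIl hp hB t hVt
      have hsx1 : s ≠ p.1 + 1 := fun hc => by rw [hc, hxf] at hqη; simp at hqη
      set j₁ := (p.1 - s).val with hj₁
      have hpj : s + (j₁ : ZMod L) = p.1 := by
        rw [hj₁, natCast_val', add_comm, sub_add_cancel]
      have hj₁L : j₁ < L := ZMod.val_lt _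
      have hj₁0 : 0 < j₁ := by
        rcases Nat.eq_zero_or_pos j₁ with h | h
        · rw [h, Nat.cast_zero, add_zero] at hpj
          exact absurd hpj hsx
        · exact h
      have hneq : ∀ k : ℕ, k < L → k ≠ j₁ → s + (k : ZMod L) ≠ p.1 := by
        intro k hkL hkj hc
        exact hkj (add_cast_inj (n := L) hkL hj₁L (hc.trans hpj.symm))
      have hneq1 : ∀ k : ℕ, 1 ≤ k → k < L → k - 1 ≠ j₁ → s + (k : ZMod L) ≠ p.1 + 1 := by
        intro k h1 hkL hkj hc
        apply hkj
        apply add_cast_inj (n := L) (a := k - 1) (b := j₁) (by omega) hj₁L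
        have hc2 : (k : ZMod L) = (j₁ : ZMod L) + 1 :=
          add_left_cancel (a := s) (by rw [hc, ← hpj]; ring)
        rw [Nat.cast_sub h1, Nat.cast_one, hc2]
        ring
      rcases lt_trichotomy j₁ a with hja | hja | hja
      · exfalso
        have h := halt j₁ hj₁0 hja
        rw [hpj, Vplus_particle hVt] at h
        simp at h
      · -- U1 : p.1 = s + a
        have hpa : s + (a : ZMod L) = p.1 := by rw [← hja]; exact hpj
        have haL1 : a + 1 < L := by
          by_contra hcc
          have haeq : a + 1 = L := by omega
          have hz : ((a + 1 : ℕ) : ZMod L) = 0 := by rw [haeq]; exact ZMod.natCast_self L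
          have hps : p.1 + 1 = s := by
            calc p.1 + 1 = s + ((a : ZMod L) + 1) := by rw [← hpa]; ring
            _ = s + ((a + 1 : ℕ) : ZMod L) := by push_cast; ring
            _ = s := by rw [hz, add_zero]
          rw [← hps, hxf] at hqη
          simp at hqη
        have hsite : s + ((a + 1 : ℕ) : ZMod L) = p.1 + 1 := by
          push_cast
          rw [← hpa]
          ring
        have hT' : moveR η p (s + ((a + 1 : ℕ) : ZMod L), t) = true := by
          rw [hsite]
          exact (moveR_at_x1 hL t).mpr (Or.inr hVt)
        have hlt' : ∀ k, 0 < k → k < a + 1 → moveR η p (s + (k : ZMod L), t) = false := by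
          intro k h0 hk
          rcases Nat.lt_or_ge k a with hka | hka
          · rw [moveR_other_eq hL (hneq k (by omega) (by omega))
              (hneq1 k (by omega) (by omega) (by omega)) t]
            exact halt k h0 hka
          · have hkeq : k = a := by omega
            rw [show s + (k : ZMod L) = p.1 from by rw [hkeq]; exact hpa]
            rw [Bool.eq_false_iff]
            intro hc
            exact ((moveR_at_x hL t).mp hc).2 hVt
        by_cases hVb : (p.1, t - 1) ∈ Vplus η p
        · have hk₀a : k₀ = a :=
            (hk₀u a (by omega) le_rfl (by rw [hpa]; exact Vplus_particle hVb)).symm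
          refine AOne_intro (moveR η p) (s, t) (a + 1) (by omega) hT' hlt' (a + 1)
            (by omega) le_rfl ?_ ?_
          · rw [hsite]
            exact (moveR_at_x1 hL (t - 1)).mpr (Or.inr hVb)
          · intro k h1 hk2 hkT
            rcases Nat.lt_or_ge k (a + 1) with hka | hka
            · exfalso
              rcases Nat.lt_or_ge k a with hka' | hka'
              · rw [moveR_other_eq hL (hneq k (by omega) (by omega))
                  (hneq1 k h1 (by omega) (by omega)) (t - 1)] at hkT
                have := hk₀u k h1 (by omega) hkT
                omega
              · have hkeq : k = a := by omega
                rw [show s + (k : ZMod L) = p.1 from by rw [hkeq]; exact hpa] at hkT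
                exact ((moveR_at_x hL (t - 1)).mp hkT).2 hVb
            · omega
        · have hx1b : η (p.1 + 1, t - 1) = false := lemB hIl hp hB t hVt
          refine AOne_intro (moveR η p) (s, t) (a + 1) (by omega) hT' hlt' k₀ hk₀1
            (by omega) ?_ ?_
          · rw [row_unchanged_eq hL hVb]
            exact hk₀T
          · intro k h1 hk2 hkT
            rw [row_unchanged_eq hL hVb] at hkT
            rcases Nat.lt_or_ge k (a + 1) with hka | hka
            · exact hk₀u k h1 (by omega) hkT
            · exfalso
              have hkeq : k = a + 1 := by omega
              rw [hkeq, hsite, lemB hIl hp hB t hVt] at hkT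
              simp at hkT
      · -- U2 : j₁ > a, window untouched
        have hne' : ∀ k : ℕ, 1 ≤ k → k ≤ a →
            (s + (k : ZMod L) ≠ p.1) ∧ (s + (k : ZMod L) ≠ p.1 + 1) := fun k h1 h2 =>
          ⟨hneq k (by omega) (by omega), hneq1 k h1 (by omega) (by omega)⟩
        refine AOne_intro (moveR η p) (s, t) a ha0 ?_ ?_ k₀ hk₀1 hk₀2 ?_ ?_
        · rw [moveR_other_eq hL (hne' a (by omega) le_rfl).1 (hne' a (by omega) le_rfl).2 t]
          exact haT
        · intro k h0 hk
          rw [moveR_other_eq hL (hne' k (by omega) (by omega)).1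
            (hne' k (by omega) (by omega)).2 t]
          exact halt k h0 hk
        · rw [moveR_other_eq hL (hne' k₀ hk₀1 hk₀2).1 (hne' k₀ hk₀1 hk₀2).2 (t - 1)]
          exact hk₀T
        · intro k h1 hk2 hkT
          rw [moveR_other_eq hL (hne' k h1 hk2).1 (hne' k h1 hk2).2 (t - 1)] at hkT
          exact hk₀u k h1 hk2 hkT
    · -- row t unchanged
      have hT' : moveR η p (s + (a : ZMod L), t) = true := by
        rw [row_unchanged_eq hL hVt]
        exact haT
      have hlt' : ∀ k, 0 < k → k < a → moveR η p (s + (k : ZMod L), t) = false :=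
        fun k h0 hk => by rw [row_unchanged_eq hL hVt]; exact halt k h0 hk
      by_cases hVb : (p.1, t - 1) ∈ Vplus η p
      · have hxt : η (p.1, t) = false := by
          rw [Bool.eq_false_iff]
          intro hc
          apply hVt
          have h2 : η (p.1, (t - 1) + 1) = true := by rwa [sub_add_cancel]
          have h3 := Vplus_up hVb h2
          rwa [sub_add_cancel] at h3
        have hsx : s ≠ p.1 := fun hc => by rw [hc, hxt] at hqη; simp at hqη
        set j₁ := (p.1 - s).val with hj₁
        have hpj : s + (j₁ : ZMod L) = p.1 := by
          rw [hj₁, natCast_val', add_comm, sub_add_cancel]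
        have hj₁L : j₁ < L := ZMod.val_lt _
        have hj₁0 : 0 < j₁ := by
          rcases Nat.eq_zero_or_pos j₁ with h | h
          · rw [h, Nat.cast_zero, add_zero] at hpj
            exact absurd hpj hsx
          · exact h
        have hneq : ∀ k : ℕ, k < L → k ≠ j₁ → s + (k : ZMod L) ≠ p.1 := by
          intro k hkL hkj hc
          exact hkj (add_cast_inj (n := L) hkL hj₁L (hc.trans hpj.symm))
        have hneq1 : ∀ k : ℕ, 1 ≤ k → k < L → k - 1 ≠ j₁ → s + (k : ZMod L) ≠ p.1 + 1 := by
          intro k h1 hkL hkj hc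
          apply hkj
          apply add_cast_inj (n := L) (a := k - 1) (b := j₁) (by omega) hj₁L
          have hc2 : (k : ZMod L) = (j₁ : ZMod L) + 1 :=
            add_left_cancel (a := s) (by rw [hc, ← hpj]; ring)
          rw [Nat.cast_sub h1, Nat.cast_one, hc2]
          ring
        rcases lt_trichotomy j₁ a with hja | hja | hja
        · -- both x and x+1 in the window
          have hk₀j : k₀ = j₁ :=
            (hk₀u j₁ (by omega) (by omega) (by rw [hpj]; exact Vplus_particle hVb)).symm
          refine AOne_intro (moveR η p) (s, t) a ha0 hT' hlt' (j₁ + 1) (by omega)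
            (by omega) ?_ ?_
          · rw [show s + ((j₁ + 1 : ℕ) : ZMod L) = p.1 + 1 from by push_cast; rw [← hpj]; ring]
            exact (moveR_at_x1 hL (t - 1)).mpr (Or.inr hVb)
          · intro k h1 hk2 hkT
            by_cases hkj : k = j₁
            · exfalso
              rw [hkj, hpj] at hkT
              exact ((moveR_at_x hL (t - 1)).mp hkT).2 hVb
            · by_cases hkj1 : k = j₁ + 1
              · exact hkj1
              · rw [moveR_other_eq hL (hneq k (by omega) hkj)
                  (hneq1 k h1 (by omega) (by omega)) (t - 1)] at hkT
                have := hk₀u k h1 hk2 hkT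
                omega
        · exfalso
          have hsa : s + (a : ZMod L) = p.1 := by rw [← hja]; exact hpj
          rw [hsa, hxt] at haT
          simp at haT
        · -- j₁ > a
          have hne' : ∀ k : ℕ, 1 ≤ k → k ≤ a →
              (s + (k : ZMod L) ≠ p.1) ∧ (s + (k : ZMod L) ≠ p.1 + 1) := fun k h1 h2 =>
            ⟨hneq k (by omega) (by omega), hneq1 k h1 (by omega) (by omega)⟩
          refine AOne_intro (moveR η p) (s, t) a ha0 hT' hlt' k₀ hk₀1 hk₀2 ?_ ?_
          · rw [moveR_other_eq hL (hne' k₀ hk₀1 hk₀2).1 (hne' k₀ hk₀1 hk₀2).2 (t - 1)]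
            exact hk₀T
          · intro k h1 hk2 hkT
            rw [moveR_other_eq hL (hne' k h1 hk2).1 (hne' k h1 hk2).2 (t - 1)] at hkT
            exact hk₀u k h1 hk2 hkT
      · refine AOne_intro (moveR η p) (s, t) a ha0 hT' hlt' k₀ hk₀1 hk₀2 ?_ ?_
        · rw [row_unchanged_eq hL hVb]
          exact hk₀T
        · intro k h1 hk2 hkT
          rw [row_unchanged_eq hL hVb] at hkT
          exact hk₀u k h1 hk2 hkT

lemma interlaced_moveR (hL : 2 ≤ L) [NeZero L] [NeZero N] {m1 : ℕ} {η : Cfg L N} {p : Site L N}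
    (hm1 : 1 < m1) (hIl : Interlaced m1 η) (hp : η p = true) (hB : 1 ≤ dB η p) :
    Interlaced m1 (moveR η p) := by
  refine ⟨rows_moveR hL hm1 hIl hp hB, fun q hq =>
    ⟨Acond_moveR hL hm1 hIl hp hB q hq, ?_⟩⟩
  exact Dcond_generic (row_two hm1 (rows_moveR hL hm1 hIl hp hB))
    (Acond_moveR hL hm1 hIl hp hB) q hq

/-- The bijection between particles of `η` and particles of `moveR η p`. -/
def phiV (η : Cfg L N) (p : Site L N) (r : Site L N) : Site L N :=
  if r ∈ Vplus η p then (r.1 + 1, r.2) else r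

lemma not_right_of_colup (hL : 2 ≤ L) [NeZero L] [NeZero N] {m1 : ℕ} {η : Cfg L N}
    {p : Site L N} (hIl : Interlaced m1 η) (hp : η p = true) (hB : 1 ≤ dB η p)
    {rt : ZMod N} (hcol : (p.1, rt + 1) ∈ Vplus η p) : η (p.1 + 1, rt) = false := by
  have h := lemB hIl hp hB (rt + 1) hcol
  simpa using h

lemma phi_inj [NeZero L] [NeZero N] {m1 : ℕ} {η : Cfg L N} {p : Site L N}
    (hIl : Interlaced m1 η) (hp : η p = true) (hB : 1 ≤ dB η p)
    {r r' : Site L N} (hr : η r = true) (hr' : η r' = true)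
    (h : phiV η p r = phiV η p r') : r = r' := by
  unfold phiV at h
  by_cases h1 : r ∈ Vplus η p <;> by_cases h2 : r' ∈ Vplus η p
  · rw [if_pos h1, if_pos h2] at h
    obtain ⟨hx, ht⟩ := Prod.ext_iff.mp h
    exact Prod.ext (add_right_cancel hx) ht
  · exfalso
    rw [if_pos h1, if_neg h2] at h
    have hmem : (p.1, r.2) ∈ Vplus η p := by
      have h1' := h1
      rwa [show r = (p.1, r.2) from Prod.ext (show r.1 = p.1 from Vplus_fst h1) rfl] at h1'
    have : η (p.1 + 1, r.2) = true := by
      rw [show ((p.1 + 1 : ZMod L), r.2) = r' from by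
        rw [← h]; exact Prod.ext (by simp [Vplus_fst h1]) rfl]
      exact hr'
    rw [lemA hIl hp hB r.2 hmem] at this
    simp at this
  · exfalso
    rw [if_neg h1, if_pos h2] at h
    have hmem : (p.1, r'.2) ∈ Vplus η p := by
      have h2' := h2
      rwa [show r' = (p.1, r'.2) from Prod.ext (show r'.1 = p.1 from Vplus_fst h2) rfl] at h2'
    have hx' := (Prod.ext_iff.mp h).1
    have ht' := (Prod.ext_iff.mp h).2
    have : η (p.1 + 1, r'.2) = true := by
      rw [show ((p.1 + 1 : ZMod L), r'.2) = r from Prod.ext (by rw [hx', Vplus_fst h2]) ht'.symm]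
      exact hr
    rw [lemA hIl hp hB r'.2 hmem] at this
    simp at this
  · rwa [if_neg h1, if_neg h2] at h

lemma phi_surj (hL : 2 ≤ L) {η : Cfg L N} {p : Site L N} {z : Site L N}
    (hz : moveR η p z = true) : ∃ r, η r = true ∧ phiV η p r = z := by
  obtain ⟨zx, zt⟩ := z
  by_cases h1 : zx = p.1 + 1 ∧ (p.1, zt) ∈ Vplus η p
  · refine ⟨(p.1, zt), Vplus_particle h1.2, ?_⟩
    unfold phiV
    rw [if_pos h1.2]
    exact Prod.ext (by simp [h1.1]) rfl
  · have hset : η (zx, zt) = true ∧ (zx, zt) ∉ Vplus η p := by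
      by_cases hx : zx = p.1
      · subst hx
        exact (moveR_at_x hL zt).mp hz
      · by_cases hx1 : zx = p.1 + 1
        · subst hx1
          rcases (moveR_at_x1 hL zt).mp hz with h | h
          · refine ⟨h, fun hc => ?_⟩
            have hf := Vplus_fst hc
            simp only at hf
            exact add_one_ne hL p.1 hf
          · exact absurd ⟨rfl, h⟩ h1
        · exact ⟨(moveR_other hL hx hx1 zt).mp hz, fun hc => hx (Vplus_fst hc)⟩
    exact ⟨(zx, zt), hset.1, by unfold phiV; rw [if_neg hset.2]⟩

lemma step_particle [NeZero L] [NeZero N] {m1 : ℕ} {η : Cfg L N}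
    (hm1 : 1 < m1) (hIl : Interlaced m1 η) (r : Site L N) : η (stepUR η r) = true := by
  have hrow1 : ∃ s : ZMod L, η (s, r.2 + 1) = true := by
    obtain ⟨s₁, s₂, _, h1, _⟩ := row_two hm1 hIl.1 (r.2 + 1)
    exact ⟨s₁, h1⟩
  obtain ⟨f, hfinf, hfL, hfT, hflt⟩ := f_gap hrow1 r.1
  have hdf : dF η r = f := hfinf
  show η (r.1 + (dF η r : ZMod L), r.2 + 1) = true
  rw [hdf]
  exact hfT

lemma iter_particle [NeZero L] [NeZero N] {m1 : ℕ} {η : Cfg L N}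
    (hm1 : 1 < m1) (hIl : Interlaced m1 η) (q : Site L N) (hq : η q = true) :
    ∀ n, η ((stepUR η)^[n] q) = true := by
  intro n
  induction n with
  | zero => simpa using hq
  | succ n ih =>
    rw [Function.iterate_succ_apply']
    exact step_particle hm1 hIl _

lemma step_conj (hL : 2 ≤ L) [NeZero L] [NeZero N] {m1 : ℕ} {η : Cfg L N} {p : Site L N}
    (hm1 : 1 < m1) (hIl : Interlaced m1 η) (hp : η p = true) (hB : 1 ≤ dB η p)
    (r : Site L N) (hr : η r = true) :
    stepUR (moveR η p) (phiV η p r) = phiV η p (stepUR η r) ∧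
      dF (moveR η p) (phiV η p r) + (if r ∈ Vplus η p then 1 else 0) =
        dF η r + (if stepUR η r ∈ Vplus η p then 1 else 0) := by
  obtain ⟨rx, rt⟩ := r
  have hrow1 : ∃ s : ZMod L, η (s, rt + 1) = true := by
    obtain ⟨s₁, s₂, _, h1, _⟩ := row_two hm1 hIl.1 (rt + 1)
    exact ⟨s₁, h1⟩
  obtain ⟨f, hfinf, hfL, hfT, hflt⟩ := f_gap hrow1 rx
  have hdf : dF η (rx, rt) = f := hfinf
  have hstep : stepUR η (rx, rt) = (rx + (f : ZMod L), rt + 1) := by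
    show (rx + (dF η (rx, rt) : ZMod L), rt + 1) = _
    rw [hdf]
  rw [hstep, hdf]
  by_cases hrV : (rx, rt) ∈ Vplus η p
  · obtain rfl : rx = p.1 := Vplus_fst hrV
    have hφr : phiV η p (p.1, rt) = (p.1 + 1, rt) := by
      unfold phiV
      rw [if_pos hrV]
    rw [hφr, if_pos hrV]
    by_cases hwV : ((p.1 + (f : ZMod L), rt + 1) : Site L N) ∈ Vplus η p
    · -- case (i) : both in V, f = 0
      have hf0 : f = 0 := by
        have hfx : p.1 + (f : ZMod L) = p.1 := Vplus_fst hwV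
        have : (f : ZMod L) = ((0 : ℕ) : ZMod L) := by
          rw [Nat.cast_zero]
          exact add_left_cancel (hfx.trans (add_zero p.1).symm)
        exact zcast_inj hfL (by omega) this
      subst hf0
      have hwmem : (p.1, rt + 1) ∈ Vplus η p := by simpa using hwV
      have hdf' : dF (moveR η p) (p.1 + 1, rt) = 0 := by
        show sInf {k : ℕ | moveR η p ((p.1 + 1) + (k : ZMod L), rt + 1) = true} = 0
        refine sInf_eq_of ?_ (by omega)
        show moveR η p ((p.1 + 1) + ((0 : ℕ) : ZMod L), rt + 1) = true
        rw [Nat.cast_zero, add_zero]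
        exact (moveR_at_x1 hL (rt + 1)).mpr (Or.inr hwmem)
      constructor
      · show ((p.1 + 1) + (dF (moveR η p) (p.1 + 1, rt) : ZMod L), rt + 1) = _
        rw [hdf']
        unfold phiV
        rw [if_pos hwV]
        simp
      · rw [hdf', if_pos hwV]
    · -- case (ii) : r ∈ V, w ∉ V
      have hf0 : f ≠ 0 := by
        intro h
        subst h
        apply hwV
        have hTT : η (p.1, rt + 1) = true := by simpa using hfT
        have := Vplus_up hrV hTT
        simpa using this
      have hx_empty : η (p.1, rt + 1) = false := by
        have := hflt 0 (by omega)
        simpa using this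
      have hnV' : (p.1, rt + 1) ∉ Vplus η p := fun hc => by
        rw [Vplus_particle hc] at hx_empty
        simp at hx_empty
      have hdf' : dF (moveR η p) (p.1 + 1, rt) = f - 1 := by
        show sInf {k : ℕ | moveR η p ((p.1 + 1) + (k : ZMod L), rt + 1) = true} = f - 1
        refine sInf_eq_of ?_ ?_
        · have hsite : (p.1 + 1) + ((f - 1 : ℕ) : ZMod L) = p.1 + (f : ZMod L) := by
            rw [Nat.cast_sub (by omega), Nat.cast_one]
            ring
          rw [hsite, row_unchanged_eq hL hnV']
          exact hfT
        · intro k hk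
          have hsite : (p.1 + 1) + ((k : ℕ) : ZMod L) = p.1 + ((k + 1 : ℕ) : ZMod L) := by
            push_cast
            ring
          rw [hsite, row_unchanged_eq hL hnV']
          have hfl := hflt (k + 1) (by omega)
          rw [hfl]
          simp
      constructor
      · show ((p.1 + 1) + (dF (moveR η p) (p.1 + 1, rt) : ZMod L), rt + 1) = _
        rw [hdf']
        unfold phiV
        rw [if_neg hwV]
        have hsite : (p.1 + 1) + ((f - 1 : ℕ) : ZMod L) = p.1 + (f : ZMod L) := by
          rw [Nat.cast_sub (by omega), Nat.cast_one]
          ring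
        rw [hsite]
      · rw [hdf', if_neg hwV]
        omega
  · have hφr : phiV η p (rx, rt) = (rx, rt) := by
      unfold phiV
      rw [if_neg hrV]
    rw [hφr, if_neg hrV]
    by_cases hwV : ((rx + (f : ZMod L), rt + 1) : Site L N) ∈ Vplus η p
    · -- case (iii) : r ∉ V, w ∈ V
      have hwx : rx + (f : ZMod L) = p.1 := Vplus_fst hwV
      have hw2 : (p.1, rt + 1) ∈ Vplus η p := by
        rw [← hwx]
        exact hwV
      have hrxne : rx ≠ p.1 + 1 := by
        intro hc
        rw [hc, not_right_of_colup hL hIl hp hB hw2] at hr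
        simp at hr
      have hdf' : dF (moveR η p) (rx, rt) = f + 1 := by
        show sInf {k : ℕ | moveR η p (rx + (k : ZMod L), rt + 1) = true} = f + 1
        refine sInf_eq_of ?_ ?_
        · have hsite : rx + ((f + 1 : ℕ) : ZMod L) = p.1 + 1 := by
            push_cast
            rw [← hwx]
            ring
          rw [hsite]
          exact (moveR_at_x1 hL (rt + 1)).mpr (Or.inr hw2)
        · intro k hk
          rcases Nat.lt_or_ge k f with hkf | hkf
          · have hne : rx + (k : ZMod L) ≠ p.1 := by
              intro hc
              have : k = f := add_cast_inj (n := L) (by omega) hfL (hc.trans hwx.symm)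
              omega
            have hne1 : rx + (k : ZMod L) ≠ p.1 + 1 := by
              intro hc
              rcases Nat.eq_zero_or_pos k with hk0 | hk0
              · rw [hk0, Nat.cast_zero, add_zero] at hc
                exact hrxne hc
              · have h2 : (k : ZMod L) = ((k - 1 : ℕ) : ZMod L) + 1 := by
                  rw [Nat.cast_sub (by omega), Nat.cast_one]
                  ring
                rw [h2] at hc
                have h3 : rx + ((k - 1 : ℕ) : ZMod L) = p.1 := by
                  have := add_right_cancel (a := rx + ((k - 1 : ℕ) : ZMod L)) (b := (1 : ZMod L))
                    (c := p.1) (by rw [← hc]; ring)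
                  exact this
                have h4 : η (p.1, rt + 1) = false := by
                  rw [← h3]
                  exact hflt (k - 1) (by omega)
                rw [Vplus_particle hw2] at h4
                simp at h4
            rw [moveR_other_eq hL hne hne1]
            simp [hflt k hkf]
          · have hkeq : k = f := by omega
            rw [hkeq, hwx]
            intro hc
            exact ((moveR_at_x hL (rt + 1)).mp hc).2 hw2
      constructor
      · show (rx + (dF (moveR η p) (rx, rt) : ZMod L), rt + 1) = _
        rw [hdf']
        unfold phiV
        rw [if_pos hwV]
        have hsite : rx + ((f + 1 : ℕ) : ZMod L) = (rx + (f : ZMod L)) + 1 := by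
          push_cast
          ring
        rw [hsite]
      · rw [hdf', if_pos hwV]
    · -- case (iv) : neither in V
      have hdf' : dF (moveR η p) (rx, rt) = f := by
        show sInf {k : ℕ | moveR η p (rx + (k : ZMod L), rt + 1) = true} = f
        refine sInf_eq_of ?_ ?_
        · by_cases hcol : ((p.1, rt + 1) : Site L N) ∈ Vplus η p
          · have hne : rx + (f : ZMod L) ≠ p.1 := by
              intro hc
              apply hwV
              rw [show ((rx + (f : ZMod L), rt + 1) : Site L N) = (p.1, rt + 1) from
                Prod.ext hc rfl]
              exact hcol
            by_cases hx1 : rx + (f : ZMod L) = p.1 + 1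
            · rw [hx1]
              exact (moveR_at_x1 hL (rt + 1)).mpr (Or.inr hcol)
            · rw [moveR_other_eq hL hne hx1]
              exact hfT
          · rw [row_unchanged_eq hL hcol]
            exact hfT
        · intro k hk
          by_cases hcol : ((p.1, rt + 1) : Site L N) ∈ Vplus η p
          · have hne : rx + (k : ZMod L) ≠ p.1 := by
              intro hc
              have h4 : η (p.1, rt + 1) = false := by
                rw [← hc]
                exact hflt k hk
              rw [Vplus_particle hcol] at h4
              simp at h4
            have hne1 : rx + (k : ZMod L) ≠ p.1 + 1 := by
              intro hc
              rcases Nat.eq_zero_or_pos k with hk0 | hk0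
              · rw [hk0, Nat.cast_zero, add_zero] at hc
                rw [hc, not_right_of_colup hL hIl hp hB hcol] at hr
                simp at hr
              · have h2 : (k : ZMod L) = ((k - 1 : ℕ) : ZMod L) + 1 := by
                  rw [Nat.cast_sub (by omega), Nat.cast_one]
                  ring
                rw [h2] at hc
                have h3 : rx + ((k - 1 : ℕ) : ZMod L) = p.1 :=
                  add_right_cancel (b := (1 : ZMod L)) (by rw [← hc]; ring)
                have h4 : η (p.1, rt + 1) = false := by
                  rw [← h3]
                  exact hflt (k - 1) (by omega)
                rw [Vplus_particle hcol] at h4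
                simp at h4
            rw [moveR_other_eq hL hne hne1]
            simp [hflt k hk]
          · rw [row_unchanged_eq hL hcol]
            simp [hflt k hk]
      constructor
      · show (rx + (dF (moveR η p) (rx, rt) : ZMod L), rt + 1) = _
        rw [hdf']
        unfold phiV
        rw [if_neg hwV]
      · rw [hdf', if_neg hwV]

lemma iter_conj (hL : 2 ≤ L) [NeZero L] [NeZero N] {m1 : ℕ} {η : Cfg L N} {p : Site L N}
    (hm1 : 1 < m1) (hIl : Interlaced m1 η) (hp : η p = true) (hB : 1 ≤ dB η p)
    (q : Site L N) (hq : η q = true) (n : ℕ) :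
    (stepUR (moveR η p))^[n] (phiV η p q) = phiV η p ((stepUR η)^[n] q) := by
  induction n with
  | zero => simp
  | succ n ih =>
    rw [Function.iterate_succ_apply', Function.iterate_succ_apply', ih,
      (step_conj hL hm1 hIl hp hB _ (iter_particle hm1 hIl q hq n)).1]

lemma retTime_phi (hL : 2 ≤ L) [NeZero L] [NeZero N] {m1 : ℕ} {η : Cfg L N} {p : Site L N}
    (hm1 : 1 < m1) (hIl : Interlaced m1 η) (hp : η p = true) (hB : 1 ≤ dB η p)
    (q : Site L N) (hq : η q = true) :
    retTime (moveR η p) (phiV η p q) = retTime η q := by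
  unfold retTime
  congr 1
  ext n
  simp only [Set.mem_setOf_eq]
  constructor
  · rintro ⟨h0, hiter⟩
    refine ⟨h0, ?_⟩
    rw [iter_conj hL hm1 hIl hp hB q hq n] at hiter
    exact phi_inj hIl hp hB (iter_particle hm1 hIl q hq n) hq hiter
  · rintro ⟨h0, hiter⟩
    exact ⟨h0, by rw [iter_conj hL hm1 hIl hp hB q hq n, hiter]⟩

lemma wind_phi (hL : 2 ≤ L) [NeZero L] [NeZero N] {m1 : ℕ} {η : Cfg L N} {p : Site L N}
    (hm1 : 1 < m1) (hIl : Interlaced m1 η) (hp : η p = true) (hB : 1 ≤ dB η p)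
    (q : Site L N) (hq : η q = true) :
    windV (moveR η p) (phiV η p q) = windV η q ∧
      windH (moveR η p) (phiV η p q) = windH η q := by
  have hret := retTime_phi hL hm1 hIl hp hB q hq
  constructor
  · unfold windV
    rw [hret]
  · unfold windH
    rw [hret]
    congr 1
    set T := retTime η q with hT
    rcases Nat.eq_zero_or_pos T with hT0 | hT0
    · simp [hT0]
    · have hTq : (stepUR η)^[T] q = q := by
        have hne : {t : ℕ | 0 < t ∧ (stepUR η)^[t] q = q}.Nonempty := by
          by_contra h
          rw [Set.not_nonempty_iff_eq_empty] at h
          have : T = 0 := by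
            rw [hT]
            unfold retTime
            rw [h, Nat.sInf_empty]
          omega
        have := Nat.sInf_mem hne
        exact this.2
      set χ : Site L N → ℕ := fun r => if r ∈ Vplus η p then 1 else 0 with hχ
      have key : ∀ i : ℕ,
          dF (moveR η p) ((stepUR (moveR η p))^[i] (phiV η p q)) + χ ((stepUR η)^[i] q) =
            dF η ((stepUR η)^[i] q) + χ ((stepUR η)^[i + 1] q) := by
        intro i
        rw [iter_conj hL hm1 hIl hp hB q hq i, Function.iterate_succ_apply']
        exact (step_conj hL hm1 hIl hp hB _ (iter_particle hm1 hIl q hq i)).2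
      have hsum : (∑ i ∈ Finset.range T,
            dF (moveR η p) ((stepUR (moveR η p))^[i] (phiV η p q))) +
            (∑ i ∈ Finset.range T, χ ((stepUR η)^[i] q)) =
          (∑ i ∈ Finset.range T, dF η ((stepUR η)^[i] q)) +
            (∑ i ∈ Finset.range T, χ ((stepUR η)^[i + 1] q)) := by
        rw [← Finset.sum_add_distrib, ← Finset.sum_add_distrib]
        exact Finset.sum_congr rfl (fun i _ => key i)
      have hshift : (∑ i ∈ Finset.range T, χ ((stepUR η)^[i + 1] q)) =
          ∑ i ∈ Finset.range T, χ ((stepUR η)^[i] q) := by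
        have h1 := Finset.sum_range_succ (fun i => χ ((stepUR η)^[i] q)) T
        have h2 := Finset.sum_range_succ' (fun i => χ ((stepUR η)^[i] q)) T
        rw [hTq] at h1
        have h3 : (stepUR η)^[0] q = q := rfl
        rw [h3] at h2
        omega
      omega

end Aux

/-- If `B_p ≥ 1`, shifting every particle of `V_p⁺` one step to the right
produces again a valid interlaced configuration, in the same sector `Ω_{L,N;m1,m2}`. -/
theorem moveR_preserves_sector
    {L N : ℕ} [NeZero L] [NeZero N] (hL : 2 ≤ L) (hN : 2 ≤ N)
    (m1 m2 : ℕ) (hm1 : 1 < m1) (hm1L : m1 < L) (hm2 : 1 ≤ m2) (hm2N : m2 < N)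
    (hslope : m1 * N + m2 * L < L * N)
    (η : Cfg L N) (hη : InSector m1 m2 η)
    (p : Site L N) (hp : η p = true) (hB : 1 ≤ dB η p) :
    InSector m1 m2 (moveR η p) := by
  obtain ⟨hIl, hwind⟩ := hη
  refine ⟨interlaced_moveR hL hm1 hIl hp hB, ?_⟩
  intro q' hq'
  obtain ⟨r, hr, rfl⟩ := phi_surj hL hq'
  obtain ⟨hv, hh⟩ := wind_phi hL hm1 hIl hp hB r hr
  rw [hv, hh]
  exact hwind r hr

end QWhittaker
end
end
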